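/- arXiv:2302.06105 — 7 statements merged into one kernel-verified Lean document; each statement's English description precedes it below -/
import Mathlib

section
/- Let 𝔽 be one of ℝ, ℂ, or the quaternions ℍ, let A₀ = (1/2)·diag(1, −1, 1, −1) ∈ M₄(𝔽), and let C_{4,𝔽} = {P* A₀ P : P ∈ M₄(𝔽), P*P = I₄} be the orbit of A₀ under conjugation by the unitary group over 𝔽. Then the ℝ-linear span of C_{4,𝔽} is the whole real vector space E(4,𝔽); i.e. C_{4,𝔽} is not contained in any real hyperplane of E(4,𝔽) through the origin. -/
open Matrix

set_option linter.unusedSectionVars false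
set_option maxHeartbeats 2000000

/-- `C_{4,𝔽}`, the orbit of `(1/2)·diag(1,−1,1,−1)` under unitary conjugation over `𝔽`,
spans the whole space `E(4,𝔽)` of traceless Hermitian matrices over `ℝ`. -/
def CSpansE (𝔽 : Type) [Ring 𝔽] [StarRing 𝔽] [Algebra ℝ 𝔽] : Prop :=
  (↑(Submodule.span ℝ
      {B : Matrix (Fin 4) (Fin 4) 𝔽 | ∃ P : Matrix (Fin 4) (Fin 4) 𝔽,
        Pᴴ * P = 1 ∧
        B = Pᴴ * ((1 / 2 : ℝ) • Matrix.diagonal ![1, -1, 1, -1]) * P}) :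
    Set (Matrix (Fin 4) (Fin 4) 𝔽)) =
    {A | Aᴴ = A ∧ Matrix.trace A = 0}

namespace CAux

lemma findim_mul_eq_one_comm {A : Type*} [Ring A] [Algebra ℝ A] [FiniteDimensional ℝ A]
    {a b : A} (h : a * b = 1) : b * a = 1 := by
  have hs : Function.Surjective (LinearMap.mulLeft ℝ a) := fun x =>
    ⟨b * x, by simp [LinearMap.mulLeft_apply, ← mul_assoc, h]⟩
  have hi : Function.Injective (LinearMap.mulLeft ℝ a) :=
    LinearMap.injective_iff_surjective.mpr hs
  have : a * (b * a) = a * 1 := by rw [← mul_assoc, h, one_mul, mul_one]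
  exact hi this

variable {𝔽 : Type} [Ring 𝔽] [StarRing 𝔽] [Algebra ℝ 𝔽] [StarModule ℝ 𝔽]
  [FiniteDimensional ℝ 𝔽] [Nontrivial 𝔽]

/-- the model matrix -/
noncomputable def A0 (𝔽 : Type) [Ring 𝔽] [Algebra ℝ 𝔽] : Matrix (Fin 4) (Fin 4) 𝔽 :=
  (1 / 2 : ℝ) • Matrix.diagonal ![1, -1, 1, -1]

/-- the orbit -/
def SS (𝔽 : Type) [Ring 𝔽] [StarRing 𝔽] [Algebra ℝ 𝔽] : Set (Matrix (Fin 4) (Fin 4) 𝔽) :=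
  {B : Matrix (Fin 4) (Fin 4) 𝔽 | ∃ P : Matrix (Fin 4) (Fin 4) 𝔽,
    Pᴴ * P = 1 ∧ B = Pᴴ * ((1 / 2 : ℝ) • Matrix.diagonal ![1, -1, 1, -1]) * P}

lemma mem_SS {B : Matrix (Fin 4) (Fin 4) 𝔽} :
    B ∈ SS 𝔽 ↔ ∃ P, Pᴴ * P = 1 ∧ B = Pᴴ * A0 𝔽 * P := Iff.rfl

lemma A0_mem : A0 𝔽 ∈ SS 𝔽 :=
  ⟨1, by simp, by simp [A0]⟩

lemma SS_conj {X R : Matrix (Fin 4) (Fin 4) 𝔽} (hX : X ∈ SS 𝔽) (hR : Rᴴ * R = 1) :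
    Rᴴ * X * R ∈ SS 𝔽 := by
  obtain ⟨P, hP, rfl⟩ := hX
  refine ⟨P * R, ?_, ?_⟩
  · rw [Matrix.conjTranspose_mul]
    calc Rᴴ * Pᴴ * (P * R) = Rᴴ * (Pᴴ * P) * R := by
          rw [Matrix.mul_assoc, Matrix.mul_assoc, Matrix.mul_assoc]
      _ = 1 := by rw [hP, Matrix.mul_one, hR]
  · rw [Matrix.conjTranspose_mul]
    simp only [Matrix.mul_assoc, A0]
  
lemma A0_herm : (A0 𝔽)ᴴ = A0 𝔽 := by
  unfold A0
  ext i j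
  fin_cases i <;> fin_cases j <;>
    simp [Matrix.conjTranspose_apply, Matrix.diagonal_apply, star_smul]

lemma v_center : ∀ (k : Fin 4) (x : 𝔽), x * (![1,-1,1,-1] : Fin 4 → 𝔽) k
    = (![1,-1,1,-1] : Fin 4 → 𝔽) k * x := by
  intro k x; fin_cases k <;> simp

lemma trace_conj_A0 (hsc : ∀ x : 𝔽, star x * x = x * star x)
    (P : Matrix (Fin 4) (Fin 4) 𝔽) (hP : Pᴴ * P = 1) :
    Matrix.trace (Pᴴ * A0 𝔽 * P) = 0 := by
  have hPP : P * Pᴴ = 1 := findim_mul_eq_one_comm hP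
  set v : Fin 4 → 𝔽 := ![1,-1,1,-1] with hv
  have key : Matrix.trace (Pᴴ * Matrix.diagonal v * P) = 0 := by
    have e1 : ∀ i : Fin 4, (Pᴴ * Matrix.diagonal v * P) i i
        = ∑ k, v k * (P k i * star (P k i)) := by
      intro i
      rw [Matrix.mul_assoc, Matrix.mul_apply]
      congr 1; funext k
      rw [Matrix.diagonal_mul, Matrix.conjTranspose_apply]
      calc star (P k i) * (v k * P k i) = (star (P k i) * v k) * P k i := by rw [mul_assoc]
        _ = (v k * star (P k i)) * P k i := by rw [v_center]
        _ = v k * (star (P k i) * P k i) := by rw [mul_assoc]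
        _ = v k * (P k i * star (P k i)) := by rw [hsc]
    have e2 : ∀ k : Fin 4, ∑ i, v k * (P k i * star (P k i)) = v k := by
      intro k
      rw [← Finset.mul_sum]
      have : ∑ i, P k i * star (P k i) = (P * Pᴴ) k k := by
        rw [Matrix.mul_apply]; congr 1
      rw [this, hPP, Matrix.one_apply_eq, mul_one]
    calc Matrix.trace (Pᴴ * Matrix.diagonal v * P)
        = ∑ i, ∑ k, v k * (P k i * star (P k i)) := by
          rw [Matrix.trace]; exact Finset.sum_congr rfl fun i _ => e1 i
      _ = ∑ k, ∑ i, v k * (P k i * star (P k i)) := Finset.sum_comm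
      _ = ∑ k : Fin 4, v k := Finset.sum_congr rfl fun k _ => e2 k
      _ = 0 := by rw [hv]; simp [Fin.sum_univ_four]
  unfold A0
  rw [Matrix.mul_smul, Matrix.smul_mul, Matrix.trace_smul, key, smul_zero]

/-! ### permutation diagonals -/

noncomputable def P2mat (𝔽 : Type) [Ring 𝔽] : Matrix (Fin 4) (Fin 4) 𝔽 :=
  Matrix.of ![![1,0,0,0],![0,0,1,0],![0,1,0,0],![0,0,0,1]]

noncomputable def P3mat (𝔽 : Type) [Ring 𝔽] : Matrix (Fin 4) (Fin 4) 𝔽 :=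
  Matrix.of ![![1,0,0,0],![0,1,0,0],![0,0,0,1],![0,0,1,0]]

lemma D2_mem : ((1/2:ℝ) • Matrix.diagonal ![1,1,-1,-1] : Matrix (Fin 4) (Fin 4) 𝔽) ∈ SS 𝔽 := by
  refine ⟨P2mat 𝔽, ?_, ?_⟩
  · ext i j
    fin_cases i <;> fin_cases j <;>
      simp [P2mat, Matrix.mul_apply, Fin.sum_univ_four, Matrix.one_apply,
        Matrix.conjTranspose_apply, Matrix.vecHead, Matrix.vecTail]
  · ext i j
    fin_cases i <;> fin_cases j <;>
      simp [P2mat, Matrix.mul_apply, Fin.sum_univ_four, Matrix.diagonal_apply,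
        Matrix.conjTranspose_apply, Matrix.vecHead, Matrix.vecTail,
        mul_smul_comm, smul_mul_assoc]

lemma D3_mem : ((1/2:ℝ) • Matrix.diagonal ![1,-1,-1,1] : Matrix (Fin 4) (Fin 4) 𝔽) ∈ SS 𝔽 := by
  refine ⟨P3mat 𝔽, ?_, ?_⟩
  · ext i j
    fin_cases i <;> fin_cases j <;>
      simp [P3mat, Matrix.mul_apply, Fin.sum_univ_four, Matrix.one_apply,
        Matrix.conjTranspose_apply, Matrix.vecHead, Matrix.vecTail]
  · ext i j
    fin_cases i <;> fin_cases j <;>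
      simp [P3mat, Matrix.mul_apply, Fin.sum_univ_four, Matrix.diagonal_apply,
        Matrix.conjTranspose_apply, Matrix.vecHead, Matrix.vecTail,
        mul_smul_comm, smul_mul_assoc]


lemma D1_mem : ((1/2:ℝ) • Matrix.diagonal ![1,-1,1,-1] : Matrix (Fin 4) (Fin 4) 𝔽) ∈ SS 𝔽 :=
  A0_mem



noncomputable def Q01 (u : 𝔽) : Matrix (Fin 4) (Fin 4) 𝔽 :=
  Matrix.of ![![((3/5:ℝ)•(1:𝔽)),((4/5:ℝ)•u),0,0],![((-(4/5):ℝ)•(star u)),((3/5:ℝ)•(1:𝔽)),0,0],![0,0,1,0],![0,0,0,1]]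

noncomputable def M01 (u : 𝔽) : Matrix (Fin 4) (Fin 4) 𝔽 :=
  Matrix.of ![![((-(7/50):ℝ)•(1:𝔽)),((12/25:ℝ)•u),0,0],![((12/25:ℝ)•(star u)),(((7/50):ℝ)•(1:𝔽)),0,0],![0,0,(((1/2):ℝ)•(1:𝔽)),0],![0,0,0,((-(1/2):ℝ)•(1:𝔽))]]

lemma Q01_unit (u : 𝔽) (hu : u * star u = 1) (hu' : star u * u = 1) :
    (Q01 u)ᴴ * (Q01 u) = 1 := by
  ext a b
  fin_cases a <;> fin_cases b <;>
    simp only [Q01, Matrix.mul_apply, Fin.sum_univ_four, Matrix.conjTranspose_apply,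
      Matrix.one_apply, Matrix.of_apply, Matrix.cons_val', Matrix.cons_val_zero,
      Matrix.cons_val_one, Matrix.head_cons, Matrix.head_fin_const, Matrix.empty_val',
      Matrix.cons_val_fin_one, Matrix.vecHead, Matrix.vecTail, Function.comp_apply,
      Matrix.cons_val_two, Matrix.cons_val_three, Matrix.tail_cons,
      star_smul, star_one, star_star, star_zero, star_trivial,
      smul_mul_assoc, mul_smul_comm, smul_smul, mul_one, one_mul, mul_zero, zero_mul,
      smul_zero, zero_smul, add_zero, zero_add, neg_mul, mul_neg, neg_smul, smul_neg,
      neg_zero, neg_neg, star_neg, hu, hu', Fin.zero_eta, Fin.mk_one, Fin.reduceFinMk, Matrix.cons_val_succ,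
      Fin.succ_zero_eq_one, Fin.succ_one_eq_two, Fin.isValue, reduceIte, Fin.reduceEq] <;>
    (first | rfl | module)

lemma Q01_conj (u : 𝔽) (hu : u * star u = 1) (hu' : star u * u = 1) :
    (Q01 u)ᴴ * ((1/2:ℝ) • Matrix.diagonal (![1,-1,1,-1] : Fin 4 → 𝔽)) * (Q01 u) = M01 u := by
  have hDQ : Matrix.diagonal (![1,-1,1,-1] : Fin 4 → 𝔽) * Q01 u =
      Matrix.of ![![((3/5:ℝ)•(1:𝔽)),((4/5:ℝ)•u),0,0],![(((4/5):ℝ)•(star u)),((-(3/5):ℝ)•(1:𝔽)),0,0],![0,0,1,0],![0,0,0,-1]] := by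
    ext a b
    rw [Matrix.diagonal_mul]
    fin_cases a <;> fin_cases b <;>
      simp only [Q01, Matrix.of_apply, Matrix.cons_val', Matrix.cons_val_zero,
        Matrix.cons_val_one, Matrix.head_cons, Matrix.head_fin_const, Matrix.empty_val',
        Matrix.cons_val_fin_one, Matrix.vecHead, Matrix.vecTail, Function.comp_apply,
        Matrix.cons_val_two, Matrix.cons_val_three, Matrix.tail_cons, one_mul, neg_mul,
        mul_one, mul_zero, neg_zero, neg_neg, neg_smul, smul_zero, neg_one_mul,
        Fin.zero_eta, Fin.mk_one, Fin.reduceFinMk, Matrix.cons_val_succ,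
      Fin.succ_zero_eq_one, Fin.succ_one_eq_two, Fin.isValue, reduceIte, Fin.reduceEq] <;>
      (first | rfl | module)
  rw [Matrix.mul_assoc, Matrix.smul_mul, Matrix.mul_smul, hDQ]
  ext a b
  fin_cases a <;> fin_cases b <;>
    simp only [Q01, M01, Matrix.smul_apply, Matrix.mul_apply, Fin.sum_univ_four, Matrix.conjTranspose_apply,
      Matrix.one_apply, Matrix.of_apply, Matrix.cons_val', Matrix.cons_val_zero,
      Matrix.cons_val_one, Matrix.head_cons, Matrix.head_fin_const, Matrix.empty_val',
      Matrix.cons_val_fin_one, Matrix.vecHead, Matrix.vecTail, Function.comp_apply,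
      Matrix.cons_val_two, Matrix.cons_val_three, Matrix.tail_cons,
      star_smul, star_one, star_star, star_zero, star_trivial,
      smul_mul_assoc, mul_smul_comm, smul_smul, mul_one, one_mul, mul_zero, zero_mul,
      smul_zero, zero_smul, add_zero, zero_add, neg_mul, mul_neg, neg_smul, smul_neg,
      neg_zero, neg_neg, star_neg, hu, hu', Fin.zero_eta, Fin.mk_one, Fin.reduceFinMk, Matrix.cons_val_succ,
      Fin.succ_zero_eq_one, Fin.succ_one_eq_two, Fin.isValue, reduceIte, Fin.reduceEq] <;>
    (first | rfl | module)

lemma symE01 (u : 𝔽) :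
    Matrix.single (0 : Fin 4) (1 : Fin 4) u
      + Matrix.single (1 : Fin 4) (0 : Fin 4) (star u)
    = (25/24:ℝ) • (M01 u - M01 (-u)) := by
  ext a b
  fin_cases a <;> fin_cases b <;>
    simp only [M01, Matrix.single, Matrix.add_apply, Matrix.smul_apply,
      Matrix.sub_apply, Matrix.of_apply, Matrix.cons_val', Matrix.cons_val_zero,
      Matrix.cons_val_one, Matrix.head_cons, Matrix.head_fin_const, Matrix.empty_val',
      Matrix.cons_val_fin_one, Matrix.vecHead, Matrix.vecTail, Function.comp_apply,
      Matrix.cons_val_two, Matrix.cons_val_three, Matrix.tail_cons, star_neg,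
      smul_smul, Fin.zero_eta, Fin.mk_one, Fin.reduceFinMk, Matrix.cons_val_succ,
      Fin.succ_zero_eq_one, Fin.succ_one_eq_two, Fin.isValue, reduceIte, Fin.reduceEq, and_self, and_true, true_and,
      and_false, false_and, star_zero, smul_zero, sub_zero, zero_sub, sub_self, neg_zero, neg_neg, smul_neg, sub_neg_eq_add] <;>
    (first | rfl | module)

lemma pairT01 (u : 𝔽) (hu : u * star u = 1) (hu' : star u * u = 1) :
    Matrix.single (0 : Fin 4) (1 : Fin 4) u
      + Matrix.single (1 : Fin 4) (0 : Fin 4) (star u)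
    ∈ Submodule.span ℝ (SS 𝔽) := by
  have hun : (-u) * star (-u) = 1 := by simpa using hu
  have hun' : star (-u) * (-u) = 1 := by simpa using hu'
  have h1 : M01 u ∈ SS 𝔽 := by
    have hm := SS_conj (D1_mem (𝔽 := 𝔽)) (Q01_unit u hu hu')
    rwa [Q01_conj u hu hu'] at hm
  have h2 : M01 (-u) ∈ SS 𝔽 := by
    have hm := SS_conj (D1_mem (𝔽 := 𝔽)) (Q01_unit (-u) hun hun')
    rwa [Q01_conj (-u) hun hun'] at hm
  rw [symE01]
  exact Submodule.smul_mem _ _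
    (sub_mem (Submodule.subset_span h1) (Submodule.subset_span h2))


noncomputable def Q23 (u : 𝔽) : Matrix (Fin 4) (Fin 4) 𝔽 :=
  Matrix.of ![![1,0,0,0],![0,1,0,0],![0,0,((3/5:ℝ)•(1:𝔽)),((4/5:ℝ)•u)],![0,0,((-(4/5):ℝ)•(star u)),((3/5:ℝ)•(1:𝔽))]]

noncomputable def M23 (u : 𝔽) : Matrix (Fin 4) (Fin 4) 𝔽 :=
  Matrix.of ![![(((1/2):ℝ)•(1:𝔽)),0,0,0],![0,((-(1/2):ℝ)•(1:𝔽)),0,0],![0,0,((-(7/50):ℝ)•(1:𝔽)),((12/25:ℝ)•u)],![0,0,((12/25:ℝ)•(star u)),(((7/50):ℝ)•(1:𝔽))]]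

lemma Q23_unit (u : 𝔽) (hu : u * star u = 1) (hu' : star u * u = 1) :
    (Q23 u)ᴴ * (Q23 u) = 1 := by
  ext a b
  fin_cases a <;> fin_cases b <;>
    simp only [Q23, Matrix.mul_apply, Fin.sum_univ_four, Matrix.conjTranspose_apply,
      Matrix.one_apply, Matrix.of_apply, Matrix.cons_val', Matrix.cons_val_zero,
      Matrix.cons_val_one, Matrix.head_cons, Matrix.head_fin_const, Matrix.empty_val',
      Matrix.cons_val_fin_one, Matrix.vecHead, Matrix.vecTail, Function.comp_apply,
      Matrix.cons_val_two, Matrix.cons_val_three, Matrix.tail_cons,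
      star_smul, star_one, star_star, star_zero, star_trivial,
      smul_mul_assoc, mul_smul_comm, smul_smul, mul_one, one_mul, mul_zero, zero_mul,
      smul_zero, zero_smul, add_zero, zero_add, neg_mul, mul_neg, neg_smul, smul_neg,
      neg_zero, neg_neg, star_neg, hu, hu', Fin.zero_eta, Fin.mk_one, Fin.reduceFinMk, Matrix.cons_val_succ,
      Fin.succ_zero_eq_one, Fin.succ_one_eq_two, Fin.isValue, reduceIte, Fin.reduceEq] <;>
    (first | rfl | module)

lemma Q23_conj (u : 𝔽) (hu : u * star u = 1) (hu' : star u * u = 1) :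
    (Q23 u)ᴴ * ((1/2:ℝ) • Matrix.diagonal (![1,-1,1,-1] : Fin 4 → 𝔽)) * (Q23 u) = M23 u := by
  have hDQ : Matrix.diagonal (![1,-1,1,-1] : Fin 4 → 𝔽) * Q23 u =
      Matrix.of ![![1,0,0,0],![0,-1,0,0],![0,0,((3/5:ℝ)•(1:𝔽)),((4/5:ℝ)•u)],![0,0,(((4/5):ℝ)•(star u)),((-(3/5):ℝ)•(1:𝔽))]] := by
    ext a b
    rw [Matrix.diagonal_mul]
    fin_cases a <;> fin_cases b <;>
      simp only [Q23, Matrix.of_apply, Matrix.cons_val', Matrix.cons_val_zero,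
        Matrix.cons_val_one, Matrix.head_cons, Matrix.head_fin_const, Matrix.empty_val',
        Matrix.cons_val_fin_one, Matrix.vecHead, Matrix.vecTail, Function.comp_apply,
        Matrix.cons_val_two, Matrix.cons_val_three, Matrix.tail_cons, one_mul, neg_mul,
        mul_one, mul_zero, neg_zero, neg_neg, neg_smul, smul_zero, neg_one_mul,
        Fin.zero_eta, Fin.mk_one, Fin.reduceFinMk, Matrix.cons_val_succ,
      Fin.succ_zero_eq_one, Fin.succ_one_eq_two, Fin.isValue, reduceIte, Fin.reduceEq] <;>
      (first | rfl | module)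
  rw [Matrix.mul_assoc, Matrix.smul_mul, Matrix.mul_smul, hDQ]
  ext a b
  fin_cases a <;> fin_cases b <;>
    simp only [Q23, M23, Matrix.smul_apply, Matrix.mul_apply, Fin.sum_univ_four, Matrix.conjTranspose_apply,
      Matrix.one_apply, Matrix.of_apply, Matrix.cons_val', Matrix.cons_val_zero,
      Matrix.cons_val_one, Matrix.head_cons, Matrix.head_fin_const, Matrix.empty_val',
      Matrix.cons_val_fin_one, Matrix.vecHead, Matrix.vecTail, Function.comp_apply,
      Matrix.cons_val_two, Matrix.cons_val_three, Matrix.tail_cons,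
      star_smul, star_one, star_star, star_zero, star_trivial,
      smul_mul_assoc, mul_smul_comm, smul_smul, mul_one, one_mul, mul_zero, zero_mul,
      smul_zero, zero_smul, add_zero, zero_add, neg_mul, mul_neg, neg_smul, smul_neg,
      neg_zero, neg_neg, star_neg, hu, hu', Fin.zero_eta, Fin.mk_one, Fin.reduceFinMk, Matrix.cons_val_succ,
      Fin.succ_zero_eq_one, Fin.succ_one_eq_two, Fin.isValue, reduceIte, Fin.reduceEq] <;>
    (first | rfl | module)

lemma symE23 (u : 𝔽) :
    Matrix.single (2 : Fin 4) (3 : Fin 4) u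
      + Matrix.single (3 : Fin 4) (2 : Fin 4) (star u)
    = (25/24:ℝ) • (M23 u - M23 (-u)) := by
  ext a b
  fin_cases a <;> fin_cases b <;>
    simp only [M23, Matrix.single, Matrix.add_apply, Matrix.smul_apply,
      Matrix.sub_apply, Matrix.of_apply, Matrix.cons_val', Matrix.cons_val_zero,
      Matrix.cons_val_one, Matrix.head_cons, Matrix.head_fin_const, Matrix.empty_val',
      Matrix.cons_val_fin_one, Matrix.vecHead, Matrix.vecTail, Function.comp_apply,
      Matrix.cons_val_two, Matrix.cons_val_three, Matrix.tail_cons, star_neg,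
      smul_smul, Fin.zero_eta, Fin.mk_one, Fin.reduceFinMk, Matrix.cons_val_succ,
      Fin.succ_zero_eq_one, Fin.succ_one_eq_two, Fin.isValue, reduceIte, Fin.reduceEq, and_self, and_true, true_and,
      and_false, false_and, star_zero, smul_zero, sub_zero, zero_sub, sub_self, neg_zero, neg_neg, smul_neg, sub_neg_eq_add] <;>
    (first | rfl | module)

lemma pairT23 (u : 𝔽) (hu : u * star u = 1) (hu' : star u * u = 1) :
    Matrix.single (2 : Fin 4) (3 : Fin 4) u
      + Matrix.single (3 : Fin 4) (2 : Fin 4) (star u)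
    ∈ Submodule.span ℝ (SS 𝔽) := by
  have hun : (-u) * star (-u) = 1 := by simpa using hu
  have hun' : star (-u) * (-u) = 1 := by simpa using hu'
  have h1 : M23 u ∈ SS 𝔽 := by
    have hm := SS_conj (D1_mem (𝔽 := 𝔽)) (Q23_unit u hu hu')
    rwa [Q23_conj u hu hu'] at hm
  have h2 : M23 (-u) ∈ SS 𝔽 := by
    have hm := SS_conj (D1_mem (𝔽 := 𝔽)) (Q23_unit (-u) hun hun')
    rwa [Q23_conj (-u) hun hun'] at hm
  rw [symE23]
  exact Submodule.smul_mem _ _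
    (sub_mem (Submodule.subset_span h1) (Submodule.subset_span h2))


noncomputable def Q03 (u : 𝔽) : Matrix (Fin 4) (Fin 4) 𝔽 :=
  Matrix.of ![![((3/5:ℝ)•(1:𝔽)),0,0,((4/5:ℝ)•u)],![0,1,0,0],![0,0,1,0],![((-(4/5):ℝ)•(star u)),0,0,((3/5:ℝ)•(1:𝔽))]]

noncomputable def M03 (u : 𝔽) : Matrix (Fin 4) (Fin 4) 𝔽 :=
  Matrix.of ![![((-(7/50):ℝ)•(1:𝔽)),0,0,((12/25:ℝ)•u)],![0,((-(1/2):ℝ)•(1:𝔽)),0,0],![0,0,(((1/2):ℝ)•(1:𝔽)),0],![((12/25:ℝ)•(star u)),0,0,(((7/50):ℝ)•(1:𝔽))]]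

lemma Q03_unit (u : 𝔽) (hu : u * star u = 1) (hu' : star u * u = 1) :
    (Q03 u)ᴴ * (Q03 u) = 1 := by
  ext a b
  fin_cases a <;> fin_cases b <;>
    simp only [Q03, Matrix.mul_apply, Fin.sum_univ_four, Matrix.conjTranspose_apply,
      Matrix.one_apply, Matrix.of_apply, Matrix.cons_val', Matrix.cons_val_zero,
      Matrix.cons_val_one, Matrix.head_cons, Matrix.head_fin_const, Matrix.empty_val',
      Matrix.cons_val_fin_one, Matrix.vecHead, Matrix.vecTail, Function.comp_apply,
      Matrix.cons_val_two, Matrix.cons_val_three, Matrix.tail_cons,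
      star_smul, star_one, star_star, star_zero, star_trivial,
      smul_mul_assoc, mul_smul_comm, smul_smul, mul_one, one_mul, mul_zero, zero_mul,
      smul_zero, zero_smul, add_zero, zero_add, neg_mul, mul_neg, neg_smul, smul_neg,
      neg_zero, neg_neg, star_neg, hu, hu', Fin.zero_eta, Fin.mk_one, Fin.reduceFinMk, Matrix.cons_val_succ,
      Fin.succ_zero_eq_one, Fin.succ_one_eq_two, Fin.isValue, reduceIte, Fin.reduceEq] <;>
    (first | rfl | module)

lemma Q03_conj (u : 𝔽) (hu : u * star u = 1) (hu' : star u * u = 1) :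
    (Q03 u)ᴴ * ((1/2:ℝ) • Matrix.diagonal (![1,-1,1,-1] : Fin 4 → 𝔽)) * (Q03 u) = M03 u := by
  have hDQ : Matrix.diagonal (![1,-1,1,-1] : Fin 4 → 𝔽) * Q03 u =
      Matrix.of ![![((3/5:ℝ)•(1:𝔽)),0,0,((4/5:ℝ)•u)],![0,-1,0,0],![0,0,1,0],![(((4/5):ℝ)•(star u)),0,0,((-(3/5):ℝ)•(1:𝔽))]] := by
    ext a b
    rw [Matrix.diagonal_mul]
    fin_cases a <;> fin_cases b <;>
      simp only [Q03, Matrix.of_apply, Matrix.cons_val', Matrix.cons_val_zero,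
        Matrix.cons_val_one, Matrix.head_cons, Matrix.head_fin_const, Matrix.empty_val',
        Matrix.cons_val_fin_one, Matrix.vecHead, Matrix.vecTail, Function.comp_apply,
        Matrix.cons_val_two, Matrix.cons_val_three, Matrix.tail_cons, one_mul, neg_mul,
        mul_one, mul_zero, neg_zero, neg_neg, neg_smul, smul_zero, neg_one_mul,
        Fin.zero_eta, Fin.mk_one, Fin.reduceFinMk, Matrix.cons_val_succ,
      Fin.succ_zero_eq_one, Fin.succ_one_eq_two, Fin.isValue, reduceIte, Fin.reduceEq] <;>
      (first | rfl | module)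
  rw [Matrix.mul_assoc, Matrix.smul_mul, Matrix.mul_smul, hDQ]
  ext a b
  fin_cases a <;> fin_cases b <;>
    simp only [Q03, M03, Matrix.smul_apply, Matrix.mul_apply, Fin.sum_univ_four, Matrix.conjTranspose_apply,
      Matrix.one_apply, Matrix.of_apply, Matrix.cons_val', Matrix.cons_val_zero,
      Matrix.cons_val_one, Matrix.head_cons, Matrix.head_fin_const, Matrix.empty_val',
      Matrix.cons_val_fin_one, Matrix.vecHead, Matrix.vecTail, Function.comp_apply,
      Matrix.cons_val_two, Matrix.cons_val_three, Matrix.tail_cons,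
      star_smul, star_one, star_star, star_zero, star_trivial,
      smul_mul_assoc, mul_smul_comm, smul_smul, mul_one, one_mul, mul_zero, zero_mul,
      smul_zero, zero_smul, add_zero, zero_add, neg_mul, mul_neg, neg_smul, smul_neg,
      neg_zero, neg_neg, star_neg, hu, hu', Fin.zero_eta, Fin.mk_one, Fin.reduceFinMk, Matrix.cons_val_succ,
      Fin.succ_zero_eq_one, Fin.succ_one_eq_two, Fin.isValue, reduceIte, Fin.reduceEq] <;>
    (first | rfl | module)

lemma symE03 (u : 𝔽) :
    Matrix.single (0 : Fin 4) (3 : Fin 4) u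
      + Matrix.single (3 : Fin 4) (0 : Fin 4) (star u)
    = (25/24:ℝ) • (M03 u - M03 (-u)) := by
  ext a b
  fin_cases a <;> fin_cases b <;>
    simp only [M03, Matrix.single, Matrix.add_apply, Matrix.smul_apply,
      Matrix.sub_apply, Matrix.of_apply, Matrix.cons_val', Matrix.cons_val_zero,
      Matrix.cons_val_one, Matrix.head_cons, Matrix.head_fin_const, Matrix.empty_val',
      Matrix.cons_val_fin_one, Matrix.vecHead, Matrix.vecTail, Function.comp_apply,
      Matrix.cons_val_two, Matrix.cons_val_three, Matrix.tail_cons, star_neg,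
      smul_smul, Fin.zero_eta, Fin.mk_one, Fin.reduceFinMk, Matrix.cons_val_succ,
      Fin.succ_zero_eq_one, Fin.succ_one_eq_two, Fin.isValue, reduceIte, Fin.reduceEq, and_self, and_true, true_and,
      and_false, false_and, star_zero, smul_zero, sub_zero, zero_sub, sub_self, neg_zero, neg_neg, smul_neg, sub_neg_eq_add] <;>
    (first | rfl | module)

lemma pairT03 (u : 𝔽) (hu : u * star u = 1) (hu' : star u * u = 1) :
    Matrix.single (0 : Fin 4) (3 : Fin 4) u
      + Matrix.single (3 : Fin 4) (0 : Fin 4) (star u)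
    ∈ Submodule.span ℝ (SS 𝔽) := by
  have hun : (-u) * star (-u) = 1 := by simpa using hu
  have hun' : star (-u) * (-u) = 1 := by simpa using hu'
  have h1 : M03 u ∈ SS 𝔽 := by
    have hm := SS_conj (D1_mem (𝔽 := 𝔽)) (Q03_unit u hu hu')
    rwa [Q03_conj u hu hu'] at hm
  have h2 : M03 (-u) ∈ SS 𝔽 := by
    have hm := SS_conj (D1_mem (𝔽 := 𝔽)) (Q03_unit (-u) hun hun')
    rwa [Q03_conj (-u) hun hun'] at hm
  rw [symE03]
  exact Submodule.smul_mem _ _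
    (sub_mem (Submodule.subset_span h1) (Submodule.subset_span h2))


noncomputable def Q12 (u : 𝔽) : Matrix (Fin 4) (Fin 4) 𝔽 :=
  Matrix.of ![![1,0,0,0],![0,((3/5:ℝ)•(1:𝔽)),((4/5:ℝ)•u),0],![0,((-(4/5):ℝ)•(star u)),((3/5:ℝ)•(1:𝔽)),0],![0,0,0,1]]

noncomputable def M12 (u : 𝔽) : Matrix (Fin 4) (Fin 4) 𝔽 :=
  Matrix.of ![![(((1/2):ℝ)•(1:𝔽)),0,0,0],![0,((-(7/50):ℝ)•(1:𝔽)),((12/25:ℝ)•u),0],![0,((12/25:ℝ)•(star u)),(((7/50):ℝ)•(1:𝔽)),0],![0,0,0,((-(1/2):ℝ)•(1:𝔽))]]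

lemma Q12_unit (u : 𝔽) (hu : u * star u = 1) (hu' : star u * u = 1) :
    (Q12 u)ᴴ * (Q12 u) = 1 := by
  ext a b
  fin_cases a <;> fin_cases b <;>
    simp only [Q12, Matrix.mul_apply, Fin.sum_univ_four, Matrix.conjTranspose_apply,
      Matrix.one_apply, Matrix.of_apply, Matrix.cons_val', Matrix.cons_val_zero,
      Matrix.cons_val_one, Matrix.head_cons, Matrix.head_fin_const, Matrix.empty_val',
      Matrix.cons_val_fin_one, Matrix.vecHead, Matrix.vecTail, Function.comp_apply,
      Matrix.cons_val_two, Matrix.cons_val_three, Matrix.tail_cons,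
      star_smul, star_one, star_star, star_zero, star_trivial,
      smul_mul_assoc, mul_smul_comm, smul_smul, mul_one, one_mul, mul_zero, zero_mul,
      smul_zero, zero_smul, add_zero, zero_add, neg_mul, mul_neg, neg_smul, smul_neg,
      neg_zero, neg_neg, star_neg, hu, hu', Fin.zero_eta, Fin.mk_one, Fin.reduceFinMk, Matrix.cons_val_succ,
      Fin.succ_zero_eq_one, Fin.succ_one_eq_two, Fin.isValue, reduceIte, Fin.reduceEq] <;>
    (first | rfl | module)

lemma Q12_conj (u : 𝔽) (hu : u * star u = 1) (hu' : star u * u = 1) :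
    (Q12 u)ᴴ * ((1/2:ℝ) • Matrix.diagonal (![1,1,-1,-1] : Fin 4 → 𝔽)) * (Q12 u) = M12 u := by
  have hDQ : Matrix.diagonal (![1,1,-1,-1] : Fin 4 → 𝔽) * Q12 u =
      Matrix.of ![![1,0,0,0],![0,((3/5:ℝ)•(1:𝔽)),((4/5:ℝ)•u),0],![0,(((4/5):ℝ)•(star u)),((-(3/5):ℝ)•(1:𝔽)),0],![0,0,0,-1]] := by
    ext a b
    rw [Matrix.diagonal_mul]
    fin_cases a <;> fin_cases b <;>
      simp only [Q12, Matrix.of_apply, Matrix.cons_val', Matrix.cons_val_zero,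
        Matrix.cons_val_one, Matrix.head_cons, Matrix.head_fin_const, Matrix.empty_val',
        Matrix.cons_val_fin_one, Matrix.vecHead, Matrix.vecTail, Function.comp_apply,
        Matrix.cons_val_two, Matrix.cons_val_three, Matrix.tail_cons, one_mul, neg_mul,
        mul_one, mul_zero, neg_zero, neg_neg, neg_smul, smul_zero, neg_one_mul,
        Fin.zero_eta, Fin.mk_one, Fin.reduceFinMk, Matrix.cons_val_succ,
      Fin.succ_zero_eq_one, Fin.succ_one_eq_two, Fin.isValue, reduceIte, Fin.reduceEq] <;>
      (first | rfl | module)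
  rw [Matrix.mul_assoc, Matrix.smul_mul, Matrix.mul_smul, hDQ]
  ext a b
  fin_cases a <;> fin_cases b <;>
    simp only [Q12, M12, Matrix.smul_apply, Matrix.mul_apply, Fin.sum_univ_four, Matrix.conjTranspose_apply,
      Matrix.one_apply, Matrix.of_apply, Matrix.cons_val', Matrix.cons_val_zero,
      Matrix.cons_val_one, Matrix.head_cons, Matrix.head_fin_const, Matrix.empty_val',
      Matrix.cons_val_fin_one, Matrix.vecHead, Matrix.vecTail, Function.comp_apply,
      Matrix.cons_val_two, Matrix.cons_val_three, Matrix.tail_cons,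
      star_smul, star_one, star_star, star_zero, star_trivial,
      smul_mul_assoc, mul_smul_comm, smul_smul, mul_one, one_mul, mul_zero, zero_mul,
      smul_zero, zero_smul, add_zero, zero_add, neg_mul, mul_neg, neg_smul, smul_neg,
      neg_zero, neg_neg, star_neg, hu, hu', Fin.zero_eta, Fin.mk_one, Fin.reduceFinMk, Matrix.cons_val_succ,
      Fin.succ_zero_eq_one, Fin.succ_one_eq_two, Fin.isValue, reduceIte, Fin.reduceEq] <;>
    (first | rfl | module)

lemma symE12 (u : 𝔽) :
    Matrix.single (1 : Fin 4) (2 : Fin 4) u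
      + Matrix.single (2 : Fin 4) (1 : Fin 4) (star u)
    = (25/24:ℝ) • (M12 u - M12 (-u)) := by
  ext a b
  fin_cases a <;> fin_cases b <;>
    simp only [M12, Matrix.single, Matrix.add_apply, Matrix.smul_apply,
      Matrix.sub_apply, Matrix.of_apply, Matrix.cons_val', Matrix.cons_val_zero,
      Matrix.cons_val_one, Matrix.head_cons, Matrix.head_fin_const, Matrix.empty_val',
      Matrix.cons_val_fin_one, Matrix.vecHead, Matrix.vecTail, Function.comp_apply,
      Matrix.cons_val_two, Matrix.cons_val_three, Matrix.tail_cons, star_neg,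
      smul_smul, Fin.zero_eta, Fin.mk_one, Fin.reduceFinMk, Matrix.cons_val_succ,
      Fin.succ_zero_eq_one, Fin.succ_one_eq_two, Fin.isValue, reduceIte, Fin.reduceEq, and_self, and_true, true_and,
      and_false, false_and, star_zero, smul_zero, sub_zero, zero_sub, sub_self, neg_zero, neg_neg, smul_neg, sub_neg_eq_add] <;>
    (first | rfl | module)

lemma pairT12 (u : 𝔽) (hu : u * star u = 1) (hu' : star u * u = 1) :
    Matrix.single (1 : Fin 4) (2 : Fin 4) u
      + Matrix.single (2 : Fin 4) (1 : Fin 4) (star u)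
    ∈ Submodule.span ℝ (SS 𝔽) := by
  have hun : (-u) * star (-u) = 1 := by simpa using hu
  have hun' : star (-u) * (-u) = 1 := by simpa using hu'
  have h1 : M12 u ∈ SS 𝔽 := by
    have hm := SS_conj (D2_mem (𝔽 := 𝔽)) (Q12_unit u hu hu')
    rwa [Q12_conj u hu hu'] at hm
  have h2 : M12 (-u) ∈ SS 𝔽 := by
    have hm := SS_conj (D2_mem (𝔽 := 𝔽)) (Q12_unit (-u) hun hun')
    rwa [Q12_conj (-u) hun hun'] at hm
  rw [symE12]
  exact Submodule.smul_mem _ _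
    (sub_mem (Submodule.subset_span h1) (Submodule.subset_span h2))


noncomputable def Q02 (u : 𝔽) : Matrix (Fin 4) (Fin 4) 𝔽 :=
  Matrix.of ![![((3/5:ℝ)•(1:𝔽)),0,((4/5:ℝ)•u),0],![0,1,0,0],![((-(4/5):ℝ)•(star u)),0,((3/5:ℝ)•(1:𝔽)),0],![0,0,0,1]]

noncomputable def M02 (u : 𝔽) : Matrix (Fin 4) (Fin 4) 𝔽 :=
  Matrix.of ![![((-(7/50):ℝ)•(1:𝔽)),0,((12/25:ℝ)•u),0],![0,(((1/2):ℝ)•(1:𝔽)),0,0],![((12/25:ℝ)•(star u)),0,(((7/50):ℝ)•(1:𝔽)),0],![0,0,0,((-(1/2):ℝ)•(1:𝔽))]]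

lemma Q02_unit (u : 𝔽) (hu : u * star u = 1) (hu' : star u * u = 1) :
    (Q02 u)ᴴ * (Q02 u) = 1 := by
  ext a b
  fin_cases a <;> fin_cases b <;>
    simp only [Q02, Matrix.mul_apply, Fin.sum_univ_four, Matrix.conjTranspose_apply,
      Matrix.one_apply, Matrix.of_apply, Matrix.cons_val', Matrix.cons_val_zero,
      Matrix.cons_val_one, Matrix.head_cons, Matrix.head_fin_const, Matrix.empty_val',
      Matrix.cons_val_fin_one, Matrix.vecHead, Matrix.vecTail, Function.comp_apply,
      Matrix.cons_val_two, Matrix.cons_val_three, Matrix.tail_cons,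
      star_smul, star_one, star_star, star_zero, star_trivial,
      smul_mul_assoc, mul_smul_comm, smul_smul, mul_one, one_mul, mul_zero, zero_mul,
      smul_zero, zero_smul, add_zero, zero_add, neg_mul, mul_neg, neg_smul, smul_neg,
      neg_zero, neg_neg, star_neg, hu, hu', Fin.zero_eta, Fin.mk_one, Fin.reduceFinMk, Matrix.cons_val_succ,
      Fin.succ_zero_eq_one, Fin.succ_one_eq_two, Fin.isValue, reduceIte, Fin.reduceEq] <;>
    (first | rfl | module)

lemma Q02_conj (u : 𝔽) (hu : u * star u = 1) (hu' : star u * u = 1) :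
    (Q02 u)ᴴ * ((1/2:ℝ) • Matrix.diagonal (![1,1,-1,-1] : Fin 4 → 𝔽)) * (Q02 u) = M02 u := by
  have hDQ : Matrix.diagonal (![1,1,-1,-1] : Fin 4 → 𝔽) * Q02 u =
      Matrix.of ![![((3/5:ℝ)•(1:𝔽)),0,((4/5:ℝ)•u),0],![0,1,0,0],![(((4/5):ℝ)•(star u)),0,((-(3/5):ℝ)•(1:𝔽)),0],![0,0,0,-1]] := by
    ext a b
    rw [Matrix.diagonal_mul]
    fin_cases a <;> fin_cases b <;>
      simp only [Q02, Matrix.of_apply, Matrix.cons_val', Matrix.cons_val_zero,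
        Matrix.cons_val_one, Matrix.head_cons, Matrix.head_fin_const, Matrix.empty_val',
        Matrix.cons_val_fin_one, Matrix.vecHead, Matrix.vecTail, Function.comp_apply,
        Matrix.cons_val_two, Matrix.cons_val_three, Matrix.tail_cons, one_mul, neg_mul,
        mul_one, mul_zero, neg_zero, neg_neg, neg_smul, smul_zero, neg_one_mul,
        Fin.zero_eta, Fin.mk_one, Fin.reduceFinMk, Matrix.cons_val_succ,
      Fin.succ_zero_eq_one, Fin.succ_one_eq_two, Fin.isValue, reduceIte, Fin.reduceEq] <;>
      (first | rfl | module)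
  rw [Matrix.mul_assoc, Matrix.smul_mul, Matrix.mul_smul, hDQ]
  ext a b
  fin_cases a <;> fin_cases b <;>
    simp only [Q02, M02, Matrix.smul_apply, Matrix.mul_apply, Fin.sum_univ_four, Matrix.conjTranspose_apply,
      Matrix.one_apply, Matrix.of_apply, Matrix.cons_val', Matrix.cons_val_zero,
      Matrix.cons_val_one, Matrix.head_cons, Matrix.head_fin_const, Matrix.empty_val',
      Matrix.cons_val_fin_one, Matrix.vecHead, Matrix.vecTail, Function.comp_apply,
      Matrix.cons_val_two, Matrix.cons_val_three, Matrix.tail_cons,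
      star_smul, star_one, star_star, star_zero, star_trivial,
      smul_mul_assoc, mul_smul_comm, smul_smul, mul_one, one_mul, mul_zero, zero_mul,
      smul_zero, zero_smul, add_zero, zero_add, neg_mul, mul_neg, neg_smul, smul_neg,
      neg_zero, neg_neg, star_neg, hu, hu', Fin.zero_eta, Fin.mk_one, Fin.reduceFinMk, Matrix.cons_val_succ,
      Fin.succ_zero_eq_one, Fin.succ_one_eq_two, Fin.isValue, reduceIte, Fin.reduceEq] <;>
    (first | rfl | module)

lemma symE02 (u : 𝔽) :
    Matrix.single (0 : Fin 4) (2 : Fin 4) u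
      + Matrix.single (2 : Fin 4) (0 : Fin 4) (star u)
    = (25/24:ℝ) • (M02 u - M02 (-u)) := by
  ext a b
  fin_cases a <;> fin_cases b <;>
    simp only [M02, Matrix.single, Matrix.add_apply, Matrix.smul_apply,
      Matrix.sub_apply, Matrix.of_apply, Matrix.cons_val', Matrix.cons_val_zero,
      Matrix.cons_val_one, Matrix.head_cons, Matrix.head_fin_const, Matrix.empty_val',
      Matrix.cons_val_fin_one, Matrix.vecHead, Matrix.vecTail, Function.comp_apply,
      Matrix.cons_val_two, Matrix.cons_val_three, Matrix.tail_cons, star_neg,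
      smul_smul, Fin.zero_eta, Fin.mk_one, Fin.reduceFinMk, Matrix.cons_val_succ,
      Fin.succ_zero_eq_one, Fin.succ_one_eq_two, Fin.isValue, reduceIte, Fin.reduceEq, and_self, and_true, true_and,
      and_false, false_and, star_zero, smul_zero, sub_zero, zero_sub, sub_self, neg_zero, neg_neg, smul_neg, sub_neg_eq_add] <;>
    (first | rfl | module)

lemma pairT02 (u : 𝔽) (hu : u * star u = 1) (hu' : star u * u = 1) :
    Matrix.single (0 : Fin 4) (2 : Fin 4) u
      + Matrix.single (2 : Fin 4) (0 : Fin 4) (star u)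
    ∈ Submodule.span ℝ (SS 𝔽) := by
  have hun : (-u) * star (-u) = 1 := by simpa using hu
  have hun' : star (-u) * (-u) = 1 := by simpa using hu'
  have h1 : M02 u ∈ SS 𝔽 := by
    have hm := SS_conj (D2_mem (𝔽 := 𝔽)) (Q02_unit u hu hu')
    rwa [Q02_conj u hu hu'] at hm
  have h2 : M02 (-u) ∈ SS 𝔽 := by
    have hm := SS_conj (D2_mem (𝔽 := 𝔽)) (Q02_unit (-u) hun hun')
    rwa [Q02_conj (-u) hun hun'] at hm
  rw [symE02]
  exact Submodule.smul_mem _ _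
    (sub_mem (Submodule.subset_span h1) (Submodule.subset_span h2))


noncomputable def Q13 (u : 𝔽) : Matrix (Fin 4) (Fin 4) 𝔽 :=
  Matrix.of ![![1,0,0,0],![0,((3/5:ℝ)•(1:𝔽)),0,((4/5:ℝ)•u)],![0,0,1,0],![0,((-(4/5):ℝ)•(star u)),0,((3/5:ℝ)•(1:𝔽))]]

noncomputable def M13 (u : 𝔽) : Matrix (Fin 4) (Fin 4) 𝔽 :=
  Matrix.of ![![(((1/2):ℝ)•(1:𝔽)),0,0,0],![0,((-(7/50):ℝ)•(1:𝔽)),0,((12/25:ℝ)•u)],![0,0,((-(1/2):ℝ)•(1:𝔽)),0],![0,((12/25:ℝ)•(star u)),0,(((7/50):ℝ)•(1:𝔽))]]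

lemma Q13_unit (u : 𝔽) (hu : u * star u = 1) (hu' : star u * u = 1) :
    (Q13 u)ᴴ * (Q13 u) = 1 := by
  ext a b
  fin_cases a <;> fin_cases b <;>
    simp only [Q13, Matrix.mul_apply, Fin.sum_univ_four, Matrix.conjTranspose_apply,
      Matrix.one_apply, Matrix.of_apply, Matrix.cons_val', Matrix.cons_val_zero,
      Matrix.cons_val_one, Matrix.head_cons, Matrix.head_fin_const, Matrix.empty_val',
      Matrix.cons_val_fin_one, Matrix.vecHead, Matrix.vecTail, Function.comp_apply,
      Matrix.cons_val_two, Matrix.cons_val_three, Matrix.tail_cons,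
      star_smul, star_one, star_star, star_zero, star_trivial,
      smul_mul_assoc, mul_smul_comm, smul_smul, mul_one, one_mul, mul_zero, zero_mul,
      smul_zero, zero_smul, add_zero, zero_add, neg_mul, mul_neg, neg_smul, smul_neg,
      neg_zero, neg_neg, star_neg, hu, hu', Fin.zero_eta, Fin.mk_one, Fin.reduceFinMk, Matrix.cons_val_succ,
      Fin.succ_zero_eq_one, Fin.succ_one_eq_two, Fin.isValue, reduceIte, Fin.reduceEq] <;>
    (first | rfl | module)

lemma Q13_conj (u : 𝔽) (hu : u * star u = 1) (hu' : star u * u = 1) :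
    (Q13 u)ᴴ * ((1/2:ℝ) • Matrix.diagonal (![1,1,-1,-1] : Fin 4 → 𝔽)) * (Q13 u) = M13 u := by
  have hDQ : Matrix.diagonal (![1,1,-1,-1] : Fin 4 → 𝔽) * Q13 u =
      Matrix.of ![![1,0,0,0],![0,((3/5:ℝ)•(1:𝔽)),0,((4/5:ℝ)•u)],![0,0,-1,0],![0,(((4/5):ℝ)•(star u)),0,((-(3/5):ℝ)•(1:𝔽))]] := by
    ext a b
    rw [Matrix.diagonal_mul]
    fin_cases a <;> fin_cases b <;>
      simp only [Q13, Matrix.of_apply, Matrix.cons_val', Matrix.cons_val_zero,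
        Matrix.cons_val_one, Matrix.head_cons, Matrix.head_fin_const, Matrix.empty_val',
        Matrix.cons_val_fin_one, Matrix.vecHead, Matrix.vecTail, Function.comp_apply,
        Matrix.cons_val_two, Matrix.cons_val_three, Matrix.tail_cons, one_mul, neg_mul,
        mul_one, mul_zero, neg_zero, neg_neg, neg_smul, smul_zero, neg_one_mul,
        Fin.zero_eta, Fin.mk_one, Fin.reduceFinMk, Matrix.cons_val_succ,
      Fin.succ_zero_eq_one, Fin.succ_one_eq_two, Fin.isValue, reduceIte, Fin.reduceEq] <;>
      (first | rfl | module)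
  rw [Matrix.mul_assoc, Matrix.smul_mul, Matrix.mul_smul, hDQ]
  ext a b
  fin_cases a <;> fin_cases b <;>
    simp only [Q13, M13, Matrix.smul_apply, Matrix.mul_apply, Fin.sum_univ_four, Matrix.conjTranspose_apply,
      Matrix.one_apply, Matrix.of_apply, Matrix.cons_val', Matrix.cons_val_zero,
      Matrix.cons_val_one, Matrix.head_cons, Matrix.head_fin_const, Matrix.empty_val',
      Matrix.cons_val_fin_one, Matrix.vecHead, Matrix.vecTail, Function.comp_apply,
      Matrix.cons_val_two, Matrix.cons_val_three, Matrix.tail_cons,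
      star_smul, star_one, star_star, star_zero, star_trivial,
      smul_mul_assoc, mul_smul_comm, smul_smul, mul_one, one_mul, mul_zero, zero_mul,
      smul_zero, zero_smul, add_zero, zero_add, neg_mul, mul_neg, neg_smul, smul_neg,
      neg_zero, neg_neg, star_neg, hu, hu', Fin.zero_eta, Fin.mk_one, Fin.reduceFinMk, Matrix.cons_val_succ,
      Fin.succ_zero_eq_one, Fin.succ_one_eq_two, Fin.isValue, reduceIte, Fin.reduceEq] <;>
    (first | rfl | module)

lemma symE13 (u : 𝔽) :
    Matrix.single (1 : Fin 4) (3 : Fin 4) u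
      + Matrix.single (3 : Fin 4) (1 : Fin 4) (star u)
    = (25/24:ℝ) • (M13 u - M13 (-u)) := by
  ext a b
  fin_cases a <;> fin_cases b <;>
    simp only [M13, Matrix.single, Matrix.add_apply, Matrix.smul_apply,
      Matrix.sub_apply, Matrix.of_apply, Matrix.cons_val', Matrix.cons_val_zero,
      Matrix.cons_val_one, Matrix.head_cons, Matrix.head_fin_const, Matrix.empty_val',
      Matrix.cons_val_fin_one, Matrix.vecHead, Matrix.vecTail, Function.comp_apply,
      Matrix.cons_val_two, Matrix.cons_val_three, Matrix.tail_cons, star_neg,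
      smul_smul, Fin.zero_eta, Fin.mk_one, Fin.reduceFinMk, Matrix.cons_val_succ,
      Fin.succ_zero_eq_one, Fin.succ_one_eq_two, Fin.isValue, reduceIte, Fin.reduceEq, and_self, and_true, true_and,
      and_false, false_and, star_zero, smul_zero, sub_zero, zero_sub, sub_self, neg_zero, neg_neg, smul_neg, sub_neg_eq_add] <;>
    (first | rfl | module)

lemma pairT13 (u : 𝔽) (hu : u * star u = 1) (hu' : star u * u = 1) :
    Matrix.single (1 : Fin 4) (3 : Fin 4) u
      + Matrix.single (3 : Fin 4) (1 : Fin 4) (star u)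
    ∈ Submodule.span ℝ (SS 𝔽) := by
  have hun : (-u) * star (-u) = 1 := by simpa using hu
  have hun' : star (-u) * (-u) = 1 := by simpa using hu'
  have h1 : M13 u ∈ SS 𝔽 := by
    have hm := SS_conj (D2_mem (𝔽 := 𝔽)) (Q13_unit u hu hu')
    rwa [Q13_conj u hu hu'] at hm
  have h2 : M13 (-u) ∈ SS 𝔽 := by
    have hm := SS_conj (D2_mem (𝔽 := 𝔽)) (Q13_unit (-u) hun hun')
    rwa [Q13_conj (-u) hun hun'] at hm
  rw [symE13]
  exact Submodule.smul_mem _ _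
    (sub_mem (Submodule.subset_span h1) (Submodule.subset_span h2))

lemma symE_mem_all (hsc : ∀ x : 𝔽, star x * x = x * star x)
    (U : Set 𝔽) (hU : ∀ u ∈ U, u * star u = 1) (hUspan : Submodule.span ℝ U = ⊤)
    (i j : Fin 4)
    (hunit : ∀ u : 𝔽, u * star u = 1 → star u * u = 1 →
      Matrix.single i j u + Matrix.single j i (star u)
        ∈ Submodule.span ℝ (SS 𝔽)) :
    ∀ q : 𝔽, Matrix.single i j q + Matrix.single j i (star q)
      ∈ Submodule.span ℝ (SS 𝔽) := by
  intro q
  have hq : q ∈ Submodule.span ℝ U := by rw [hUspan]; trivial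
  induction hq using Submodule.span_induction with
  | mem x hx =>
      have h1 := hU x hx
      exact hunit x h1 (by rw [hsc]; exact h1)
  | zero => simp
  | add x y hx hy ihx ihy =>
      have heq : Matrix.single i j (x + y) + Matrix.single j i (star (x + y))
          = (Matrix.single i j x + Matrix.single j i (star x))
            + (Matrix.single i j y + Matrix.single j i (star y)) := by
        rw [star_add, Matrix.single_add, Matrix.single_add, add_add_add_comm]
      rw [heq]; exact add_mem ihx ihy
  | smul a x hx ih =>
      have heq : Matrix.single i j (a • x) + Matrix.single j i (star (a • x))
          = a • (Matrix.single i j x + Matrix.single j i (star x)) := by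
        rw [star_smul, star_trivial, smul_add, Matrix.smul_single,
          Matrix.smul_single]
      rw [heq]; exact Submodule.smul_mem _ _ ih

lemma diag_mem (w : Fin 4 → ℝ) (hsum : w 0 + w 1 + w 2 + w 3 = 0) :
    (Matrix.diagonal (fun k => algebraMap ℝ 𝔽 (w k))) ∈ Submodule.span ℝ (SS 𝔽) := by
  have heq : (Matrix.diagonal (fun k => algebraMap ℝ 𝔽 (w k)))
      = ((w 0 - w 1 + w 2 - w 3)/2) • ((1/2:ℝ) • Matrix.diagonal ![1,-1,1,-1])
        + ((w 0 + w 1 - w 2 - w 3)/2) • ((1/2:ℝ) • Matrix.diagonal ![1,1,-1,-1])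
        + ((w 0 - w 1 - w 2 + w 3)/2) • ((1/2:ℝ) • Matrix.diagonal ![1,-1,-1,1]) := by
    ext a b
    fin_cases a <;> fin_cases b <;>
      simp [Matrix.diagonal_apply, Algebra.algebraMap_eq_smul_one, smul_smul] <;>
      (try match_scalars) <;> linarith
  rw [heq]
  exact add_mem (add_mem
    (Submodule.smul_mem _ _ (Submodule.subset_span D1_mem))
    (Submodule.smul_mem _ _ (Submodule.subset_span D2_mem)))
    (Submodule.smul_mem _ _ (Submodule.subset_span D3_mem))

theorem generic (hsc : ∀ x : 𝔽, star x * x = x * star x)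
    (hreal : ∀ x : 𝔽, star x = x → ∃ r : ℝ, x = algebraMap ℝ 𝔽 r)
    (U : Set 𝔽) (hU : ∀ u ∈ U, u * star u = 1) (hUspan : Submodule.span ℝ U = ⊤) :
    CSpansE 𝔽 := by
  unfold CSpansE
  apply Set.Subset.antisymm
  · -- span ⊆ traceless hermitians
    intro B hB
    have hle : Submodule.span ℝ (SS 𝔽) ≤
        { carrier := {A : Matrix (Fin 4) (Fin 4) 𝔽 | Aᴴ = A ∧ Matrix.trace A = 0}
          add_mem' := by
            rintro a b ⟨ha1, ha2⟩ ⟨hb1, hb2⟩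
            exact ⟨by rw [Matrix.conjTranspose_add, ha1, hb1],
              by rw [Matrix.trace_add, ha2, hb2, add_zero]⟩
          zero_mem' := ⟨by simp, by simp⟩
          smul_mem' := by
            rintro r a ⟨ha1, ha2⟩
            exact ⟨by rw [Matrix.conjTranspose_smul, star_trivial, ha1],
              by rw [Matrix.trace_smul, ha2, smul_zero]⟩ } := by
      apply Submodule.span_le.mpr
      rintro B ⟨P, hP, rfl⟩
      constructor
      · calc (Pᴴ * ((1 / 2 : ℝ) • Matrix.diagonal ![1, -1, 1, -1]) * P)ᴴ
            = Pᴴ * ((1 / 2 : ℝ) • Matrix.diagonal ![1, -1, 1, -1])ᴴ * P := by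
              rw [Matrix.conjTranspose_mul, Matrix.conjTranspose_mul,
                Matrix.conjTranspose_conjTranspose, Matrix.mul_assoc]
          _ = Pᴴ * ((1 / 2 : ℝ) • Matrix.diagonal ![1, -1, 1, -1]) * P := by
              rw [show ((1 / 2 : ℝ) • Matrix.diagonal ![1, -1, 1, -1]
                  : Matrix (Fin 4) (Fin 4) 𝔽)ᴴ
                = (1 / 2 : ℝ) • Matrix.diagonal ![1, -1, 1, -1] from A0_herm]
      · exact trace_conj_A0 hsc P hP
    exact hle hB
  · -- traceless hermitians ⊆ span
    rintro A ⟨hA, htr⟩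
    have hA' : ∀ a b, star (A b a) = A a b := by
      intro a b
      conv_rhs => rw [← hA]
      rfl
    have hdiagreal : ∀ k, ∃ r : ℝ, A k k = algebraMap ℝ 𝔽 r := by
      intro k
      exact hreal (A k k) (hA' k k)
    choose r hr using hdiagreal
    have hsum : r 0 + r 1 + r 2 + r 3 = 0 := by
      have h1 : Matrix.trace A = algebraMap ℝ 𝔽 (r 0 + r 1 + r 2 + r 3) := by
        simp only [Matrix.trace, Matrix.diag, Fin.sum_univ_four, hr, map_add]
      rw [htr] at h1
      have := (algebraMap ℝ 𝔽).injective (a₁ := r 0 + r 1 + r 2 + r 3) (a₂ := 0)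
      simp only [map_zero] at this
      exact this h1.symm
    -- decomposition
    have hdec : A =
        ((Matrix.single (0:Fin 4) (1:Fin 4) (A 0 1)
            + Matrix.single (1:Fin 4) (0:Fin 4) (star (A 0 1)))
         + (Matrix.single (0:Fin 4) (2:Fin 4) (A 0 2)
            + Matrix.single (2:Fin 4) (0:Fin 4) (star (A 0 2)))
         + (Matrix.single (0:Fin 4) (3:Fin 4) (A 0 3)
            + Matrix.single (3:Fin 4) (0:Fin 4) (star (A 0 3)))
         + (Matrix.single (1:Fin 4) (2:Fin 4) (A 1 2)
            + Matrix.single (2:Fin 4) (1:Fin 4) (star (A 1 2)))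
         + (Matrix.single (1:Fin 4) (3:Fin 4) (A 1 3)
            + Matrix.single (3:Fin 4) (1:Fin 4) (star (A 1 3)))
         + (Matrix.single (2:Fin 4) (3:Fin 4) (A 2 3)
            + Matrix.single (3:Fin 4) (2:Fin 4) (star (A 2 3))))
        + Matrix.diagonal (fun k => algebraMap ℝ 𝔽 (r k)) := by
      ext a b
      fin_cases a <;> fin_cases b <;>
        simp [Matrix.single, Matrix.diagonal_apply, hA', ← hr]
    rw [hdec]
    refine add_mem (add_mem (add_mem (add_mem (add_mem (add_mem ?_ ?_) ?_) ?_) ?_) ?_) ?_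
    · exact symE_mem_all hsc U hU hUspan 0 1 (fun u hu hu' => pairT01 u hu hu') (A 0 1)
    · exact symE_mem_all hsc U hU hUspan 0 2 (fun u hu hu' => pairT02 u hu hu') (A 0 2)
    · exact symE_mem_all hsc U hU hUspan 0 3 (fun u hu hu' => pairT03 u hu hu') (A 0 3)
    · exact symE_mem_all hsc U hU hUspan 1 2 (fun u hu hu' => pairT12 u hu hu') (A 1 2)
    · exact symE_mem_all hsc U hU hUspan 1 3 (fun u hu hu' => pairT13 u hu hu') (A 1 3)
    · exact symE_mem_all hsc U hU hUspan 2 3 (fun u hu hu' => pairT23 u hu hu') (A 2 3)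
    · exact diag_mem r hsum


noncomputable instance : StarModule ℝ (Quaternion ℝ) := ⟨fun r a => Quaternion.star_smul r a⟩

def qI : Quaternion ℝ := ⟨0,1,0,0⟩
def qJ : Quaternion ℝ := ⟨0,0,1,0⟩
def qK : Quaternion ℝ := ⟨0,0,0,1⟩

end CAux

/-- for `𝔽 = ℝ, ℂ, ℍ`, the orbit `C_{4,𝔽}` is not contained in any real
hyperplane of `E(4,𝔽)` through the origin: its real span is all of `E(4,𝔽)`. -/
theorem C_4_substantial : CSpansE ℝ ∧ CSpansE ℂ ∧ CSpansE (Quaternion ℝ) := by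
  refine ⟨?_, ?_, ?_⟩
  · exact CAux.generic (fun x => mul_comm _ _) (fun x _ => ⟨x, rfl⟩)
      ({1} : Set ℝ) (by rintro u rfl; simp)
      (by
        rw [eq_top_iff]
        rintro x -
        rw [Submodule.mem_span_singleton]
        exact ⟨x, by simp⟩)
  · exact CAux.generic (fun x => mul_comm _ _)
      (fun x hx => ⟨x.re, by simpa using (Complex.conj_eq_iff_re.mp hx).symm⟩)
      ({1, Complex.I} : Set ℂ)
      (by rintro u (rfl | rfl) <;> simp [Complex.ext_iff])
      (by
        rw [eq_top_iff]
        rintro z -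
        have : z = z.re • (1:ℂ) + z.im • Complex.I := by
          apply Complex.ext <;> simp
        rw [this]
        exact add_mem (Submodule.smul_mem _ _ (Submodule.subset_span (by simp)))
          (Submodule.smul_mem _ _ (Submodule.subset_span (by simp))))
  · exact CAux.generic
      (fun x => by rw [Quaternion.star_mul_self, Quaternion.self_mul_star])
      (fun x hx => ⟨x.re, by rw [Quaternion.star_eq_self.mp hx]; rfl⟩)
      ({1, CAux.qI, CAux.qJ, CAux.qK} : Set (Quaternion ℝ))
      (by
        rintro u (rfl | rfl | rfl | rfl) <;>
          (apply Quaternion.ext <;>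
            simp [Quaternion.re_mul, Quaternion.imI_mul, Quaternion.imJ_mul,
              Quaternion.imK_mul] <;>
            simp [CAux.qI, CAux.qJ, CAux.qK, Quaternion.re_one, Quaternion.imI_one,
              Quaternion.imJ_one, Quaternion.imK_one]))
      (by
        rw [eq_top_iff]
        rintro a -
        have : a = a.re • (1 : Quaternion ℝ) + a.imI • CAux.qI
            + a.imJ • CAux.qJ + a.imK • CAux.qK := by
          apply Quaternion.ext <;> simp <;> simp [CAux.qI, CAux.qJ, CAux.qK, Quaternion.re_one,
            Quaternion.imI_one, Quaternion.imJ_one, Quaternion.imK_one]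
        rw [this]
        refine add_mem (add_mem (add_mem ?_ ?_) ?_) ?_ <;>
          exact Submodule.smul_mem _ _ (Submodule.subset_span (by simp)))
end

section
/- Let A be a 4×4 real symmetric matrix with tr A = 0, tr(A²) = 1, and tr(A³) = 0. Then tr(A⁴) ≥ 1/4, and equality holds if and only if A² = (1/4)·I₄ (equivalently, the eigenvalues of A are 1/2, 1/2, −1/2, −1/2, i.e. A = Pᵀ·(1/2)diag(1,1,−1,−1)·P for some orthogonal P; that is, A lies in the critical set C_{4,ℝ}). -/
open Matrix

lemma aux_trace_transpose_mul_self_nonneg (B : Matrix (Fin 4) (Fin 4) ℝ) :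
    0 ≤ Matrix.trace (Bᵀ * B) := by
  simp only [Matrix.trace, Matrix.diag, Matrix.mul_apply, Matrix.transpose_apply]
  exact Finset.sum_nonneg fun i _ => Finset.sum_nonneg fun j _ => mul_self_nonneg _

lemma aux_trace_transpose_mul_self_eq_zero (B : Matrix (Fin 4) (Fin 4) ℝ) :
    Matrix.trace (Bᵀ * B) = 0 ↔ B = 0 := by
  constructor
  · intro h
    simp only [Matrix.trace, Matrix.diag, Matrix.mul_apply, Matrix.transpose_apply] at h
    ext i j
    have h1 := (Finset.sum_eq_zero_iff_of_nonneg
      (fun i _ => Finset.sum_nonneg fun j _ => mul_self_nonneg (B j i))).mp h j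
      (Finset.mem_univ j)
    have h2 := (Finset.sum_eq_zero_iff_of_nonneg
      (fun k _ => mul_self_nonneg (B k j))).mp h1 i (Finset.mem_univ i)
    simpa using mul_self_eq_zero.mp h2
  · rintro rfl; simp

/-- for a traceless unit-norm austere `4×4` real symmetric matrix,
`tr(A⁴) ≥ 1/4`, with equality iff `A² = (1/4)·I₄`. -/
theorem trace_pow_four_lower_bound (A : Matrix (Fin 4) (Fin 4) ℝ)
    (hAsym : Aᵀ = A) (h1 : Matrix.trace A = 0) (h2 : Matrix.trace (A ^ 2) = 1)
    (h3 : Matrix.trace (A ^ 3) = 0) :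
    (1 / 4 : ℝ) ≤ Matrix.trace (A ^ 4) ∧
      (Matrix.trace (A ^ 4) = 1 / 4 ↔
        A ^ 2 = (1 / 4 : ℝ) • (1 : Matrix (Fin 4) (Fin 4) ℝ)) := by
  set B : Matrix (Fin 4) (Fin 4) ℝ := A ^ 2 - (1 / 4 : ℝ) • 1 with hB
  have hBsym : Bᵀ = B := by
    simp [hB, Matrix.transpose_sub, Matrix.transpose_smul, Matrix.transpose_pow, hAsym]
  have hexpand : B * B = A ^ 4 - (1 / 4 : ℝ) • A ^ 2 -
      ((1 / 4 : ℝ) • A ^ 2 - (1 / 16 : ℝ) • 1) := by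
    simp only [hB, sub_mul, mul_sub, smul_mul_assoc, mul_smul_comm, smul_smul, smul_sub,
      one_mul, mul_one, ← pow_add]
    norm_num
  have htr : Matrix.trace (Bᵀ * B) = Matrix.trace (A ^ 4) - 1 / 4 := by
    rw [hBsym, hexpand]
    simp only [Matrix.trace_sub, Matrix.trace_smul, Matrix.trace_one, h2]
    norm_num
  have hnn := aux_trace_transpose_mul_self_nonneg B
  have hz := aux_trace_transpose_mul_self_eq_zero B
  rw [htr] at hnn hz
  constructor
  · linarith
  · rw [show Matrix.trace (A ^ 4) = 1 / 4 ↔ Matrix.trace (A ^ 4) - 1 / 4 = 0 by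
      constructor <;> intro h <;> linarith]
    rw [hz, hB, sub_eq_zero]
end

section
/- Let A be a 4×4 real symmetric matrix with tr A = 0, tr(A²) = 1, tr(A³) = 0, and A² ≠ (1/4)·I₄. Then the matrix ξ := (A² − (1/4)I₄)/‖A² − (1/4)I₄‖ satisfies ξ² = (1/4)·I₄ and tr ξ = 0; i.e. ξ is orthogonally conjugate to (1/2)·diag(1, 1, −1, −1), so ξ lies in C_{4,ℝ}. (This says that the Gauss image of the hypersurface B̃_{4,ℝ} is C_{4,ℝ}.) -/
open Matrix

/-- the Gauss image of `B̃_{4,ℝ}` lies in `C_{4,ℝ}`: the unit normal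
`ξ = (A² − (1/4)I)/‖A² − (1/4)I‖` satisfies `ξ² = (1/4)·I₄` and `tr ξ = 0`. -/
theorem gauss_image_in_C4 (A : Matrix (Fin 4) (Fin 4) ℝ)
    (hAsym : Aᵀ = A) (h1 : Matrix.trace A = 0) (h2 : Matrix.trace (A ^ 2) = 1)
    (h3 : Matrix.trace (A ^ 3) = 0)
    (h4 : A ^ 2 ≠ (1 / 4 : ℝ) • (1 : Matrix (Fin 4) (Fin 4) ℝ))
    (ξ : Matrix (Fin 4) (Fin 4) ℝ)
    (hξ : ξ = (Real.sqrt (Matrix.trace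
        ((A ^ 2 - (1 / 4 : ℝ) • (1 : Matrix (Fin 4) (Fin 4) ℝ))ᵀ *
         (A ^ 2 - (1 / 4 : ℝ) • (1 : Matrix (Fin 4) (Fin 4) ℝ)))))⁻¹ •
      (A ^ 2 - (1 / 4 : ℝ) • (1 : Matrix (Fin 4) (Fin 4) ℝ))) :
    ξ ^ 2 = (1 / 4 : ℝ) • (1 : Matrix (Fin 4) (Fin 4) ℝ) ∧ Matrix.trace ξ = 0 := by
  have hA : A.IsHermitian := by
    simpa [Matrix.IsHermitian, Matrix.conjTranspose_eq_transpose_of_trivial] using hAsym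
  set μ : Fin 4 → ℝ := hA.eigenvalues with hμdef
  set V : Matrix (Fin 4) (Fin 4) ℝ := (hA.eigenvectorUnitary : Matrix (Fin 4) (Fin 4) ℝ) with hVdef
  have hVsV : star V * V = 1 :=
    (Matrix.mem_unitaryGroup_iff').mp (hA.eigenvectorUnitary).2
  have hVVs : V * star V = 1 :=
    (Matrix.mem_unitaryGroup_iff).mp (hA.eigenvectorUnitary).2
  have hspec : A = V * Matrix.diagonal μ * star V := by
    have := hA.spectral_theorem
    simpa using this
  -- conjugation of diagonal products
  have hmul : ∀ f g : Fin 4 → ℝ,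
      (V * Matrix.diagonal f * star V) * (V * Matrix.diagonal g * star V)
        = V * Matrix.diagonal (fun i => f i * g i) * star V := by
    intro f g
    calc (V * Matrix.diagonal f * star V) * (V * Matrix.diagonal g * star V)
        = V * (Matrix.diagonal f * (star V * V) * Matrix.diagonal g) * star V := by
          noncomm_ring
      _ = V * Matrix.diagonal (fun i => f i * g i) * star V := by
          rw [hVsV, mul_one, Matrix.diagonal_mul_diagonal]
  have hfun2 : (fun i => μ i * μ i) = fun i => μ i ^ 2 := by funext i; ring
  have hfun3 : (fun i => μ i ^ 2 * μ i) = fun i => μ i ^ 3 := by funext i; ring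
  have hA2 : A ^ 2 = V * Matrix.diagonal (fun i => μ i ^ 2) * star V := by
    rw [pow_two, hspec, hmul, hfun2]
  have hA3 : A ^ 3 = V * Matrix.diagonal (fun i => μ i ^ 3) * star V := by
    rw [pow_succ, hA2, hspec, hmul, hfun3]
  -- traces as sums of eigenvalue powers
  have htr : ∀ f : Fin 4 → ℝ,
      Matrix.trace (V * Matrix.diagonal f * star V) = ∑ i, f i := by
    intro f
    rw [Matrix.trace_mul_cycle, hVsV, Matrix.one_mul, Matrix.trace_diagonal]
  have p1 : μ 0 + μ 1 + μ 2 + μ 3 = 0 := by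
    have := h1
    rw [hspec, htr, Fin.sum_univ_four] at this
    linarith
  have p2 : μ 0 ^ 2 + μ 1 ^ 2 + μ 2 ^ 2 + μ 3 ^ 2 = 1 := by
    have := h2
    rw [hA2, htr, Fin.sum_univ_four] at this
    linarith
  have p3 : μ 0 ^ 3 + μ 1 ^ 3 + μ 2 ^ 3 + μ 3 ^ 3 = 0 := by
    have := h3
    rw [hA3, htr, Fin.sum_univ_four] at this
    linarith
  set c : ℝ := 1 / 16 - μ 0 * μ 1 * μ 2 * μ 3 with hcdef
  have key : ∀ i, (μ i ^ 2 - 1 / 4) ^ 2 = c := by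
    intro i
    fin_cases i
    · show (μ 0 ^ 2 - 1 / 4) ^ 2 = c
      linear_combination (μ 0 ^ 3 - (μ 0 + μ 1 + μ 2 + μ 3) * μ 0 ^ 2 / 2 +
        ((μ 0 + μ 1 + μ 2 + μ 3) ^ 2 - 3 * (μ 0 ^ 2 + μ 1 ^ 2 + μ 2 ^ 2 + μ 3 ^ 2)) * μ 0 / 6) * p1
        + (μ 0 ^ 2 / 2) * p2 + (μ 0 / 3) * p3
    · show (μ 1 ^ 2 - 1 / 4) ^ 2 = c
      linear_combination (μ 1 ^ 3 - (μ 0 + μ 1 + μ 2 + μ 3) * μ 1 ^ 2 / 2 +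
        ((μ 0 + μ 1 + μ 2 + μ 3) ^ 2 - 3 * (μ 0 ^ 2 + μ 1 ^ 2 + μ 2 ^ 2 + μ 3 ^ 2)) * μ 1 / 6) * p1
        + (μ 1 ^ 2 / 2) * p2 + (μ 1 / 3) * p3
    · show (μ 2 ^ 2 - 1 / 4) ^ 2 = c
      linear_combination (μ 2 ^ 3 - (μ 0 + μ 1 + μ 2 + μ 3) * μ 2 ^ 2 / 2 +
        ((μ 0 + μ 1 + μ 2 + μ 3) ^ 2 - 3 * (μ 0 ^ 2 + μ 1 ^ 2 + μ 2 ^ 2 + μ 3 ^ 2)) * μ 2 / 6) * p1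
        + (μ 2 ^ 2 / 2) * p2 + (μ 2 / 3) * p3
    · show (μ 3 ^ 2 - 1 / 4) ^ 2 = c
      linear_combination (μ 3 ^ 3 - (μ 0 + μ 1 + μ 2 + μ 3) * μ 3 ^ 2 / 2 +
        ((μ 0 + μ 1 + μ 2 + μ 3) ^ 2 - 3 * (μ 0 ^ 2 + μ 1 ^ 2 + μ 2 ^ 2 + μ 3 ^ 2)) * μ 3 / 6) * p1
        + (μ 3 ^ 2 / 2) * p2 + (μ 3 / 3) * p3
  set M : Matrix (Fin 4) (Fin 4) ℝ := A ^ 2 - (1 / 4 : ℝ) • 1 with hMdef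
  have hsmul1 : ∀ r : ℝ, (r • (1 : Matrix (Fin 4) (Fin 4) ℝ))
      = V * Matrix.diagonal (fun _ => r) * star V := by
    intro r
    have : Matrix.diagonal (fun _ : Fin 4 => r) = r • (1 : Matrix (Fin 4) (Fin 4) ℝ) := by
      ext i j
      by_cases h : i = j <;> simp [Matrix.diagonal, Matrix.one_apply, h]
    rw [this, Matrix.mul_smul, Matrix.smul_mul, Matrix.mul_one, hVVs]
  have hM : M = V * Matrix.diagonal (fun i => μ i ^ 2 - 1 / 4) * star V := by
    rw [hMdef, hA2, hsmul1 (1/4 : ℝ)]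
    rw [← Matrix.sub_mul, ← Matrix.mul_sub, Matrix.diagonal_sub]
  have hM2 : M ^ 2 = c • 1 := by
    rw [pow_two, hM, hmul]
    have hd : (fun i => (μ i ^ 2 - 1 / 4) * (μ i ^ 2 - 1 / 4)) = fun _ : Fin 4 => c := by
      funext i
      rw [← key i]; ring
    rw [hd, ← hsmul1]
  have hc0 : 0 ≤ c := by rw [← key 0]; positivity
  have hcne : c ≠ 0 := by
    intro hc
    apply h4
    have hz : ∀ i, μ i ^ 2 - 1 / 4 = 0 := by
      intro i
      have := key i
      rw [hc] at this
      exact pow_eq_zero_iff (n := 2) (by norm_num) |>.mp this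
    have : M = 0 := by
      rw [hM]
      have : Matrix.diagonal (fun i => μ i ^ 2 - 1 / 4) = 0 := by
        rw [funext hz]; simp
      rw [this, Matrix.mul_zero, Matrix.zero_mul]
    have := sub_eq_zero.mp (hMdef ▸ this)
    simpa using this
  have hcpos : 0 < c := lt_of_le_of_ne hc0 (Ne.symm hcne)
  -- the norm squared
  have hMT : Mᵀ = M := by
    rw [hMdef]
    rw [Matrix.transpose_sub, Matrix.transpose_smul, Matrix.transpose_one,
      Matrix.transpose_pow, hAsym]
  have htrM2 : Matrix.trace (Mᵀ * M) = 4 * c := by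
    rw [hMT, ← pow_two, hM2]
    simp [Matrix.trace_smul]
    ring
  have hsq : Real.sqrt (Matrix.trace (Mᵀ * M)) ^ 2 = 4 * c := by
    rw [Real.sq_sqrt (by rw [htrM2]; positivity)]
    exact htrM2
  have hξ' : ξ = (Real.sqrt (Matrix.trace (Mᵀ * M)))⁻¹ • M := hξ
  have hsqrtpos : 0 < Real.sqrt (Matrix.trace (Mᵀ * M)) := by
    rw [htrM2]
    exact Real.sqrt_pos.mpr (by positivity)
  constructor
  · rw [hξ', smul_pow, hM2, smul_smul]
    congr 1
    rw [inv_pow, hsq]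
    field_simp
  · rw [hξ', Matrix.trace_smul, hMdef]
    simp [Matrix.trace_sub, Matrix.trace_smul, h2, Matrix.trace_one]
end

section
/- Let λ₁ > λ₂ > 0 with 2(λ₁² + λ₂²) = 1 and let A be a 4×4 real symmetric matrix whose eigenvalues are λ₁, −λ₁, λ₂, −λ₂. Set ρ := 3‖A² − (1/4)I₄‖ and T_A := {X a 4×4 real symmetric matrix : tr X = 0, tr(XA) = 0, tr(XA²) = 0}, a 7-dimensional real vector space. Let S : T_A → T_A be the unique linear map with ⟨SX, Y⟩ = −(3/ρ)·(tr(XYA) + tr(XAY)) for all X, Y ∈ T_A, where ⟨X,Y⟩ = tr(XY). Then S has exactly 5 distinct eigenvalues: 3(λ₁+λ₂)/ρ, −3(λ₁+λ₂)/ρ, 3(λ₁−λ₂)/ρ, −3(λ₁−λ₂)/ρ, each with multiplicity 1, and 0 with multiplicity 3. (These are the principal curvatures of the proper Dupin hypersurface B̃_{4,ℝ} of S⁸ at A.) -/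
open Matrix

lemma trace_mul_self_eq_sum_sq {n : ℕ} (X : Matrix (Fin n) (Fin n) ℝ) (h : Xᵀ = X) :
    Matrix.trace (X * X) = ∑ i, ∑ j, (X i j)^2 := by
  have hs : ∀ i j, X j i = X i j := by
    intro i j
    rw [← congrFun (congrFun h j) i, Matrix.transpose_apply]
  simp only [Matrix.trace, Matrix.diag, Matrix.mul_apply]
  refine Finset.sum_congr rfl fun i _ => Finset.sum_congr rfl fun j _ => ?_
  rw [hs i j]; ring

lemma symm_eq_zero_of_trace {n : ℕ} (X : Matrix (Fin n) (Fin n) ℝ) (h : Xᵀ = X)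
    (h0 : Matrix.trace (X * X) = 0) : X = 0 := by
  rw [trace_mul_self_eq_sum_sq X h] at h0
  ext i j
  have h1 : ∀ i ∈ Finset.univ, (0:ℝ) ≤ ∑ j, (X i j)^2 :=
    fun i _ => Finset.sum_nonneg fun j _ => sq_nonneg _
  have h2 := (Finset.sum_eq_zero_iff_of_nonneg h1).mp h0 i (Finset.mem_univ i)
  have h3 := (Finset.sum_eq_zero_iff_of_nonneg (fun j _ => sq_nonneg (X i j))).mp h2 j (Finset.mem_univ j)
  simpa using pow_eq_zero_iff (n := 2) (by norm_num) |>.mp h3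

lemma trace_mul_self_pos {n : ℕ} (X : Matrix (Fin n) (Fin n) ℝ) (h : Xᵀ = X)
    (hne : X ≠ 0) : 0 < Matrix.trace (X * X) := by
  rcases lt_or_eq_of_le (Finset.sum_nonneg (fun i _ => Finset.sum_nonneg fun j _ => sq_nonneg (X i j))) with hlt | heq
  · rw [trace_mul_self_eq_sum_sq X h]; exact hlt
  · exact absurd (symm_eq_zero_of_trace X h (by rw [trace_mul_self_eq_sum_sq X h, ← heq])) hne

lemma eigenspace_of_basis {V : Type*} [AddCommGroup V] [Module ℝ V] {n : ℕ}
    (b : Module.Basis (Fin n) ℝ V) (S : Module.End ℝ V) (μ : Fin n → ℝ)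
    (hb : ∀ i, S (b i) = μ i • b i) (t : ℝ) :
    Module.End.eigenspace S t = Submodule.span ℝ (b '' {i | μ i = t}) := by
  apply le_antisymm
  · intro v hv
    rw [Module.End.mem_eigenspace_iff] at hv
    set c : Fin n → ℝ := fun i => b.repr v i with hc
    have hv1 : v = ∑ i, c i • b i := by
      rw [hc]; exact (b.sum_repr v).symm
    have h1 : ∑ i, ((μ i - t) * c i) • b i = 0 := by
      have e1 : S v = ∑ i, (μ i * c i) • b i := by
        conv_lhs => rw [hv1]
        rw [map_sum]
        refine Finset.sum_congr rfl fun i _ => ?_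
        rw [_root_.map_smul, hb i, smul_smul, mul_comm]
      have e2 : S v = ∑ i, (t * c i) • b i := by
        rw [hv, hv1, Finset.smul_sum]
        refine Finset.sum_congr rfl fun i _ => ?_
        rw [smul_smul]
      calc ∑ i, ((μ i - t) * c i) • b i
          = (∑ i, (μ i * c i) • b i) - ∑ i, (t * c i) • b i := by
            rw [← Finset.sum_sub_distrib]
            refine Finset.sum_congr rfl fun i _ => ?_
            rw [← sub_smul]; ring_nf
        _ = 0 := by rw [← e1, ← e2, sub_self]
    have hco : ∀ i, (μ i - t) * c i = 0 :=
      Fintype.linearIndependent_iff.mp b.linearIndependent _ h1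
    rw [hv1]
    refine Submodule.sum_mem _ fun i _ => ?_
    by_cases hi : μ i = t
    · exact Submodule.smul_mem _ _ (Submodule.subset_span ⟨i, hi, rfl⟩)
    · have : c i = 0 := by
        have := hco i
        rcases mul_eq_zero.mp this with h' | h'
        · exact absurd (by linarith [sub_eq_zero.mp h'] : μ i = t) hi
        · exact h'
      rw [this, zero_smul]; exact Submodule.zero_mem _
  · rw [Submodule.span_le]
    rintro x ⟨i, hi, rfl⟩
    rw [SetLike.mem_coe, Module.End.mem_eigenspace_iff, hb i, hi]


namespace B4aux
variable (l1 l2 : ℝ)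

noncomputable def DD : Matrix (Fin 4) (Fin 4) ℝ := Matrix.diagonal ![l1, -l1, l2, -l2]

noncomputable def MM : Fin 7 → Matrix (Fin 4) (Fin 4) ℝ :=
![!![0,0,1,0;0,0,0,0;1,0,0,0;0,0,0,0],
  !![0,0,0,0;0,0,0,1;0,0,0,0;0,1,0,0],
  !![0,0,0,1;0,0,0,0;0,0,0,0;1,0,0,0],
  !![0,0,0,0;0,0,1,0;0,1,0,0;0,0,0,0],
  !![0,1,0,0;1,0,0,0;0,0,0,0;0,0,0,0],
  !![0,0,0,0;0,0,0,0;0,0,0,1;0,0,1,0],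
  Matrix.diagonal ![l2,-l2,-l1,l1]]

noncomputable def kap : Fin 7 → ℝ := ![l1+l2, -(l1+l2), l1-l2, -(l1-l2), 0, 0, 0]

lemma DD_eq : DD l1 l2 = Matrix.diagonal ![l1, -l1, l2, -l2] := rfl


lemma MM0 : MM l1 l2 0 = !![0,0,1,0;0,0,0,0;1,0,0,0;0,0,0,0] := rfl

lemma MM1 : MM l1 l2 1 = !![0,0,0,0;0,0,0,1;0,0,0,0;0,1,0,0] := rfl

lemma MM2 : MM l1 l2 2 = !![0,0,0,1;0,0,0,0;0,0,0,0;1,0,0,0] := rfl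

lemma MM3 : MM l1 l2 3 = !![0,0,0,0;0,0,1,0;0,1,0,0;0,0,0,0] := rfl

lemma MM4 : MM l1 l2 4 = !![0,1,0,0;1,0,0,0;0,0,0,0;0,0,0,0] := rfl

lemma MM5 : MM l1 l2 5 = !![0,0,0,0;0,0,0,0;0,0,0,1;0,0,1,0] := rfl

lemma MM6 : MM l1 l2 6 = Matrix.diagonal ![l2,-l2,-l1,l1] := rfl

lemma kap0 : kap l1 l2 0 = l1+l2 := rfl

lemma kap1 : kap l1 l2 1 = -(l1+l2) := rfl

lemma kap2 : kap l1 l2 2 = l1-l2 := rfl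

lemma kap3 : kap l1 l2 3 = -(l1-l2) := rfl

lemma kap4 : kap l1 l2 4 = 0 := rfl

lemma kap5 : kap l1 l2 5 = 0 := rfl

lemma kap6 : kap l1 l2 6 = 0 := rfl

lemma MM_symm (i : Fin 7) : (MM l1 l2 i)ᵀ = MM l1 l2 i := by
  fin_cases i
  exacts [
    (show (MM l1 l2 0)ᵀ = MM l1 l2 0 by rw [MM0]; ext p q; fin_cases p <;> fin_cases q <;> simp [Matrix.diagonal_apply, Matrix.vecHead, Matrix.vecTail]),
    (show (MM l1 l2 1)ᵀ = MM l1 l2 1 by rw [MM1]; ext p q; fin_cases p <;> fin_cases q <;> simp [Matrix.diagonal_apply, Matrix.vecHead, Matrix.vecTail]),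
    (show (MM l1 l2 2)ᵀ = MM l1 l2 2 by rw [MM2]; ext p q; fin_cases p <;> fin_cases q <;> simp [Matrix.diagonal_apply, Matrix.vecHead, Matrix.vecTail]),
    (show (MM l1 l2 3)ᵀ = MM l1 l2 3 by rw [MM3]; ext p q; fin_cases p <;> fin_cases q <;> simp [Matrix.diagonal_apply, Matrix.vecHead, Matrix.vecTail]),
    (show (MM l1 l2 4)ᵀ = MM l1 l2 4 by rw [MM4]; ext p q; fin_cases p <;> fin_cases q <;> simp [Matrix.diagonal_apply, Matrix.vecHead, Matrix.vecTail]),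
    (show (MM l1 l2 5)ᵀ = MM l1 l2 5 by rw [MM5]; ext p q; fin_cases p <;> fin_cases q <;> simp [Matrix.diagonal_apply, Matrix.vecHead, Matrix.vecTail]),
    (show (MM l1 l2 6)ᵀ = MM l1 l2 6 by rw [MM6]; exact (Matrix.diagonal_transpose _))]

lemma MM_trace (i : Fin 7) : Matrix.trace (MM l1 l2 i) = 0 := by
  fin_cases i
  exacts [
    (show Matrix.trace (MM l1 l2 0) = 0 by rw [MM0]; simp [Matrix.trace, Fin.sum_univ_four, Matrix.vecHead, Matrix.vecTail]; try ring),
    (show Matrix.trace (MM l1 l2 1) = 0 by rw [MM1]; simp [Matrix.trace, Fin.sum_univ_four, Matrix.vecHead, Matrix.vecTail]; try ring),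
    (show Matrix.trace (MM l1 l2 2) = 0 by rw [MM2]; simp [Matrix.trace, Fin.sum_univ_four, Matrix.vecHead, Matrix.vecTail]; try ring),
    (show Matrix.trace (MM l1 l2 3) = 0 by rw [MM3]; simp [Matrix.trace, Fin.sum_univ_four, Matrix.vecHead, Matrix.vecTail]; try ring),
    (show Matrix.trace (MM l1 l2 4) = 0 by rw [MM4]; simp [Matrix.trace, Fin.sum_univ_four, Matrix.vecHead, Matrix.vecTail]; try ring),
    (show Matrix.trace (MM l1 l2 5) = 0 by rw [MM5]; simp [Matrix.trace, Fin.sum_univ_four, Matrix.vecHead, Matrix.vecTail]; try ring),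
    (show Matrix.trace (MM l1 l2 6) = 0 by rw [MM6]; simp [Matrix.trace_diagonal, Fin.sum_univ_four, Matrix.vecHead, Matrix.vecTail]; try ring)]

lemma MM_trace_D (i : Fin 7) : Matrix.trace (MM l1 l2 i * DD l1 l2) = 0 := by
  fin_cases i
  exacts [
    (show Matrix.trace (MM l1 l2 0 * DD l1 l2) = 0 by rw [MM0, DD_eq]; simp [Matrix.trace, Matrix.diag, Matrix.mul_diagonal, Matrix.vecHead, Matrix.vecTail, Fin.sum_univ_four]; try ring),
    (show Matrix.trace (MM l1 l2 1 * DD l1 l2) = 0 by rw [MM1, DD_eq]; simp [Matrix.trace, Matrix.diag, Matrix.mul_diagonal, Matrix.vecHead, Matrix.vecTail, Fin.sum_univ_four]; try ring),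
    (show Matrix.trace (MM l1 l2 2 * DD l1 l2) = 0 by rw [MM2, DD_eq]; simp [Matrix.trace, Matrix.diag, Matrix.mul_diagonal, Matrix.vecHead, Matrix.vecTail, Fin.sum_univ_four]; try ring),
    (show Matrix.trace (MM l1 l2 3 * DD l1 l2) = 0 by rw [MM3, DD_eq]; simp [Matrix.trace, Matrix.diag, Matrix.mul_diagonal, Matrix.vecHead, Matrix.vecTail, Fin.sum_univ_four]; try ring),
    (show Matrix.trace (MM l1 l2 4 * DD l1 l2) = 0 by rw [MM4, DD_eq]; simp [Matrix.trace, Matrix.diag, Matrix.mul_diagonal, Matrix.vecHead, Matrix.vecTail, Fin.sum_univ_four]; try ring),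
    (show Matrix.trace (MM l1 l2 5 * DD l1 l2) = 0 by rw [MM5, DD_eq]; simp [Matrix.trace, Matrix.diag, Matrix.mul_diagonal, Matrix.vecHead, Matrix.vecTail, Fin.sum_univ_four]; try ring),
    (show Matrix.trace (MM l1 l2 6 * DD l1 l2) = 0 by rw [MM6, DD_eq, Matrix.diagonal_mul_diagonal]; simp [Matrix.trace_diagonal, Fin.sum_univ_four, Matrix.vecHead, Matrix.vecTail]; try ring)]

lemma MM_trace_D2 (i : Fin 7) : Matrix.trace (MM l1 l2 i * (DD l1 l2 * DD l1 l2)) = 0 := by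
  fin_cases i
  exacts [
    (show Matrix.trace (MM l1 l2 0 * (DD l1 l2 * DD l1 l2)) = 0 by rw [MM0, DD_eq, Matrix.diagonal_mul_diagonal]; simp [Matrix.trace, Matrix.diag, Matrix.mul_diagonal, Matrix.vecHead, Matrix.vecTail, Fin.sum_univ_four]; try ring),
    (show Matrix.trace (MM l1 l2 1 * (DD l1 l2 * DD l1 l2)) = 0 by rw [MM1, DD_eq, Matrix.diagonal_mul_diagonal]; simp [Matrix.trace, Matrix.diag, Matrix.mul_diagonal, Matrix.vecHead, Matrix.vecTail, Fin.sum_univ_four]; try ring),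
    (show Matrix.trace (MM l1 l2 2 * (DD l1 l2 * DD l1 l2)) = 0 by rw [MM2, DD_eq, Matrix.diagonal_mul_diagonal]; simp [Matrix.trace, Matrix.diag, Matrix.mul_diagonal, Matrix.vecHead, Matrix.vecTail, Fin.sum_univ_four]; try ring),
    (show Matrix.trace (MM l1 l2 3 * (DD l1 l2 * DD l1 l2)) = 0 by rw [MM3, DD_eq, Matrix.diagonal_mul_diagonal]; simp [Matrix.trace, Matrix.diag, Matrix.mul_diagonal, Matrix.vecHead, Matrix.vecTail, Fin.sum_univ_four]; try ring),
    (show Matrix.trace (MM l1 l2 4 * (DD l1 l2 * DD l1 l2)) = 0 by rw [MM4, DD_eq, Matrix.diagonal_mul_diagonal]; simp [Matrix.trace, Matrix.diag, Matrix.mul_diagonal, Matrix.vecHead, Matrix.vecTail, Fin.sum_univ_four]; try ring),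
    (show Matrix.trace (MM l1 l2 5 * (DD l1 l2 * DD l1 l2)) = 0 by rw [MM5, DD_eq, Matrix.diagonal_mul_diagonal]; simp [Matrix.trace, Matrix.diag, Matrix.mul_diagonal, Matrix.vecHead, Matrix.vecTail, Fin.sum_univ_four]; try ring),
    (show Matrix.trace (MM l1 l2 6 * (DD l1 l2 * DD l1 l2)) = 0 by rw [MM6, DD_eq, Matrix.diagonal_mul_diagonal, Matrix.diagonal_mul_diagonal]; simp [Matrix.trace_diagonal, Fin.sum_univ_four, Matrix.vecHead, Matrix.vecTail]; try ring)]

set_option maxHeartbeats 1000000 in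
lemma MM_eig (i : Fin 7) (hi : (i : ℕ) < 6) :
    DD l1 l2 * MM l1 l2 i + MM l1 l2 i * DD l1 l2 = kap l1 l2 i • MM l1 l2 i := by
  fin_cases i
  pick_goal 7
  · simp at hi
  exacts [
    (show DD l1 l2 * MM l1 l2 0 + MM l1 l2 0 * DD l1 l2 = kap l1 l2 0 • MM l1 l2 0 by rw [MM0, kap0, DD_eq]; ext p q; fin_cases p <;> fin_cases q <;> simp [Matrix.diagonal_mul, Matrix.mul_diagonal, Matrix.vecMul_diagonal, Matrix.vecHead, Matrix.vecTail] <;> ring_nf),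
    (show DD l1 l2 * MM l1 l2 1 + MM l1 l2 1 * DD l1 l2 = kap l1 l2 1 • MM l1 l2 1 by rw [MM1, kap1, DD_eq]; ext p q; fin_cases p <;> fin_cases q <;> simp [Matrix.diagonal_mul, Matrix.mul_diagonal, Matrix.vecMul_diagonal, Matrix.vecHead, Matrix.vecTail] <;> ring_nf),
    (show DD l1 l2 * MM l1 l2 2 + MM l1 l2 2 * DD l1 l2 = kap l1 l2 2 • MM l1 l2 2 by rw [MM2, kap2, DD_eq]; ext p q; fin_cases p <;> fin_cases q <;> simp [Matrix.diagonal_mul, Matrix.mul_diagonal, Matrix.vecMul_diagonal, Matrix.vecHead, Matrix.vecTail] <;> ring_nf),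
    (show DD l1 l2 * MM l1 l2 3 + MM l1 l2 3 * DD l1 l2 = kap l1 l2 3 • MM l1 l2 3 by rw [MM3, kap3, DD_eq]; ext p q; fin_cases p <;> fin_cases q <;> simp [Matrix.diagonal_mul, Matrix.mul_diagonal, Matrix.vecMul_diagonal, Matrix.vecHead, Matrix.vecTail] <;> ring_nf),
    (show DD l1 l2 * MM l1 l2 4 + MM l1 l2 4 * DD l1 l2 = kap l1 l2 4 • MM l1 l2 4 by rw [MM4, kap4, DD_eq]; ext p q; fin_cases p <;> fin_cases q <;> simp [Matrix.diagonal_mul, Matrix.mul_diagonal, Matrix.vecMul_diagonal, Matrix.vecHead, Matrix.vecTail] <;> ring_nf),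
    (show DD l1 l2 * MM l1 l2 5 + MM l1 l2 5 * DD l1 l2 = kap l1 l2 5 • MM l1 l2 5 by rw [MM5, kap5, DD_eq]; ext p q; fin_cases p <;> fin_cases q <;> simp [Matrix.diagonal_mul, Matrix.mul_diagonal, Matrix.vecMul_diagonal, Matrix.vecHead, Matrix.vecTail] <;> ring_nf)]

set_option maxHeartbeats 1000000 in
lemma MM6_eig :
    (l1^2 - l2^2) • (DD l1 l2 * MM l1 l2 6 + MM l1 l2 6 * DD l1 l2) =
      (2*l1*l2) • ((2:ℝ) • (DD l1 l2 * DD l1 l2) - (l1^2+l2^2) • 1) := by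
  rw [MM6, DD_eq, Matrix.diagonal_mul_diagonal, Matrix.diagonal_mul_diagonal,
    Matrix.diagonal_mul_diagonal]
  ext p q
  fin_cases p <;> fin_cases q <;>
    simp [Matrix.diagonal_apply, Matrix.one_apply, Matrix.vecHead, Matrix.vecTail] <;> ring

noncomputable def mu (r l1 l2 : ℝ) : Fin 7 → ℝ :=
![-(3*(l1+l2)/r), 3*(l1+l2)/r, -(3*(l1-l2)/r), 3*(l1-l2)/r, 0, 0, 0]

lemma mu0 (r : ℝ) : mu r l1 l2 0 = -(3*(l1+l2)/r) := rfl
lemma mu1 (r : ℝ) : mu r l1 l2 1 = 3*(l1+l2)/r := rfl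
lemma mu2 (r : ℝ) : mu r l1 l2 2 = -(3*(l1-l2)/r) := rfl
lemma mu3 (r : ℝ) : mu r l1 l2 3 = 3*(l1-l2)/r := rfl
lemma mu4 (r : ℝ) : mu r l1 l2 4 = 0 := rfl
lemma mu5 (r : ℝ) : mu r l1 l2 5 = 0 := rfl
lemma mu6 (r : ℝ) : mu r l1 l2 6 = 0 := rfl

set_option maxHeartbeats 1000000 in
lemma span_decomp (hl1 : l1 ≠ 0) (hne : l1^2 - l2^2 ≠ 0)
    (N : Matrix (Fin 4) (Fin 4) ℝ) (hsymm : Nᵀ = N)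
    (h1 : Matrix.trace N = 0) (h2 : Matrix.trace (N * DD l1 l2) = 0)
    (h3 : Matrix.trace (N * (DD l1 l2 * DD l1 l2)) = 0) :
    N = N 0 2 • MM l1 l2 0 + N 1 3 • MM l1 l2 1 + N 0 3 • MM l1 l2 2 +
        N 1 2 • MM l1 l2 3 + N 0 1 • MM l1 l2 4 + N 2 3 • MM l1 l2 5 +
        (N 3 3 / l1) • MM l1 l2 6 := by
  have hs : ∀ p q, N q p = N p q := by
    intro p q; rw [← congrFun (congrFun hsymm q) p, Matrix.transpose_apply]
  have e1 : N 0 0 + N 1 1 + N 2 2 + N 3 3 = 0 := by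
    have := h1
    simp [Matrix.trace, Matrix.diag, Fin.sum_univ_four] at this
    linarith
  have e2 : l1 * N 0 0 - l1 * N 1 1 + l2 * N 2 2 - l2 * N 3 3 = 0 := by
    have := h2
    rw [DD_eq] at this
    simp [Matrix.trace, Matrix.diag, Matrix.mul_diagonal, Fin.sum_univ_four,
      Matrix.vecHead, Matrix.vecTail] at this
    linarith
  have e3 : l1^2 * (N 0 0 + N 1 1) + l2^2 * (N 2 2 + N 3 3) = 0 := by
    have := h3
    rw [DD_eq, Matrix.diagonal_mul_diagonal] at this
    simp [Matrix.trace, Matrix.diag, Matrix.mul_diagonal, Fin.sum_univ_four,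
      Matrix.vecHead, Matrix.vecTail] at this
    nlinarith [this]
  have hs1 : N 0 0 + N 1 1 = 0 := by
    have key : (l1^2 - l2^2) * (N 0 0 + N 1 1) = 0 := by linear_combination e3 - l2^2 * e1
    rcases mul_eq_zero.mp key with h | h
    · exact absurd h hne
    · exact h
  have hs2 : N 2 2 + N 3 3 = 0 := by linarith
  have hd : l1 * N 0 0 + l2 * N 2 2 = 0 := by
    linear_combination e2/2 + (l1/2) * hs1 + (l2/2) * hs2
  have q33 : N 3 3 / l1 * l1 = N 3 3 := div_mul_cancel₀ _ hl1
  have q22 : N 2 2 = -(N 3 3 / l1 * l1) := by rw [q33]; linarith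
  have q00 : N 0 0 = N 3 3 / l1 * l2 := by
    have hh : l1 * N 0 0 = l1 * (N 3 3 / l1 * l2) := by
      rw [show l1 * (N 3 3 / l1 * l2) = (N 3 3 / l1 * l1) * l2 by ring, q33]
      linear_combination hd - l2 * hs2
    exact mul_left_cancel₀ hl1 hh
  have q11 : N 1 1 = -(N 3 3 / l1 * l2) := by rw [← q00]; linarith
  rw [MM0, MM1, MM2, MM3, MM4, MM5, MM6]
  ext p q
  fin_cases p <;> fin_cases q <;>
    simp [Matrix.diagonal_apply, Matrix.vecHead, Matrix.vecTail] <;>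
    linarith [hs 0 1, hs 0 2, hs 0 3, hs 1 2, hs 1 3, hs 2 3, q00, q11, q22, q33]

set_option maxHeartbeats 1000000 in
lemma indep_coeffs (hl1 : l1 ≠ 0) (g : Fin 7 → ℝ)
    (h : ∑ i, g i • MM l1 l2 i = 0) : ∀ i, g i = 0 := by
  rw [Fin.sum_univ_seven, MM0, MM1, MM2, MM3, MM4, MM5, MM6] at h
  have e : ∀ p q : Fin 4, _ = (0 : Matrix (Fin 4) (Fin 4) ℝ) p q :=
    fun p q => congrFun (congrFun h p) q
  have h02 := e 0 2
  have h13 := e 1 3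
  have h03 := e 0 3
  have h12 := e 1 2
  have h01 := e 0 1
  have h23 := e 2 3
  have h33 := e 3 3
  simp [Matrix.diagonal_apply, Matrix.vecHead, Matrix.vecTail] at h02 h13 h03 h12 h01 h23 h33
  intro i
  fin_cases i
  exacts [h02, h13, h03, h12, h01, h23, h33.resolve_right hl1]

end B4aux

set_option maxHeartbeats 2000000 in
/-- principal curvatures of the proper Dupin hypersurface `B̃_{4,ℝ}`:
the shape operator on the 7-dimensional tangent space has exactly the 5 distinct
eigenvalues `±3(λ₁+λ₂)/ρ`, `±3(λ₁−λ₂)/ρ`, `0`, with multiplicities `1,1,1,1,3`. -/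
theorem shape_operator_eigenvalues_B4 (lam1 lam2 : ℝ)
    (hlt : lam2 < lam1) (hpos : 0 < lam2)
    (hsum : 2 * (lam1 ^ 2 + lam2 ^ 2) = 1)
    (A : Matrix (Fin 4) (Fin 4) ℝ)
    (hA : ∃ P : Matrix (Fin 4) (Fin 4) ℝ, Pᵀ * P = 1 ∧
      A = Pᵀ * Matrix.diagonal ![lam1, -lam1, lam2, -lam2] * P)
    (ρ : ℝ)
    (hρ : ρ = 3 * Real.sqrt (Matrix.trace
      ((A ^ 2 - (1 / 4 : ℝ) • (1 : Matrix (Fin 4) (Fin 4) ℝ))ᵀ *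
       (A ^ 2 - (1 / 4 : ℝ) • (1 : Matrix (Fin 4) (Fin 4) ℝ)))))
    (T : Submodule ℝ (Matrix (Fin 4) (Fin 4) ℝ))
    (hT : ∀ X, X ∈ T ↔ (Xᵀ = X ∧ Matrix.trace X = 0 ∧ Matrix.trace (X * A) = 0 ∧
      Matrix.trace (X * A ^ 2) = 0))
    (S : Module.End ℝ T)
    (hS : ∀ X Y : T, Matrix.trace ((S X : Matrix (Fin 4) (Fin 4) ℝ) * (Y : Matrix (Fin 4) (Fin 4) ℝ)) =
      -(3 / ρ) * (Matrix.trace ((X : Matrix (Fin 4) (Fin 4) ℝ) * (Y : Matrix (Fin 4) (Fin 4) ℝ) * A) +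
        Matrix.trace ((X : Matrix (Fin 4) (Fin 4) ℝ) * A * (Y : Matrix (Fin 4) (Fin 4) ℝ)))) :
    Module.finrank ℝ T = 7 ∧
    (∀ μ : ℝ, S.HasEigenvalue μ ↔
      (μ = 3 * (lam1 + lam2) / ρ ∨ μ = -(3 * (lam1 + lam2) / ρ) ∨
       μ = 3 * (lam1 - lam2) / ρ ∨ μ = -(3 * (lam1 - lam2) / ρ) ∨ μ = 0)) ∧
    Module.finrank ℝ (Module.End.eigenspace S (3 * (lam1 + lam2) / ρ)) = 1 ∧
    Module.finrank ℝ (Module.End.eigenspace S (-(3 * (lam1 + lam2) / ρ))) = 1 ∧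
    Module.finrank ℝ (Module.End.eigenspace S (3 * (lam1 - lam2) / ρ)) = 1 ∧
    Module.finrank ℝ (Module.End.eigenspace S (-(3 * (lam1 - lam2) / ρ))) = 1 ∧
    Module.finrank ℝ (Module.End.eigenspace S 0) = 3 := by
  obtain ⟨P, hP, hAdef⟩ := hA
  have hP' : P * Pᵀ = 1 := mul_eq_one_comm.mp hP
  have hl1pos : 0 < lam1 := lt_trans hpos hlt
  have hl1ne : lam1 ≠ 0 := ne_of_gt hl1pos
  have hnediff : lam1 ^ 2 - lam2 ^ 2 ≠ 0 := by nlinarith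
  -- conjugation machinery
  have hPPt : ∀ X : Matrix (Fin 4) (Fin 4) ℝ, P * (Pᵀ * X) = X := by
    intro X; rw [← Matrix.mul_assoc, hP', Matrix.one_mul]
  have hPtP : ∀ X : Matrix (Fin 4) (Fin 4) ℝ, Pᵀ * (P * X) = X := by
    intro X; rw [← Matrix.mul_assoc, hP, Matrix.one_mul]
  have hAD : A = Pᵀ * B4aux.DD lam1 lam2 * P := hAdef
  have conj_mul : ∀ M N : Matrix (Fin 4) (Fin 4) ℝ,
      (Pᵀ * M * P) * (Pᵀ * N * P) = Pᵀ * (M * N) * P := by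
    intro M N
    calc (Pᵀ * M * P) * (Pᵀ * N * P) = Pᵀ * (M * (P * (Pᵀ * (N * P)))) := by
          simp only [Matrix.mul_assoc]
      _ = Pᵀ * (M * N) * P := by rw [hPPt]; simp only [Matrix.mul_assoc]
  have trace_conj : ∀ M : Matrix (Fin 4) (Fin 4) ℝ,
      Matrix.trace (Pᵀ * M * P) = Matrix.trace M := by
    intro M; rw [Matrix.trace_mul_cycle, hP', Matrix.one_mul]
  have conj_smul : ∀ (c : ℝ) (X : Matrix (Fin 4) (Fin 4) ℝ),
      Pᵀ * (c • X) * P = c • (Pᵀ * X * P) := by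
    intro c X; rw [Matrix.mul_smul, Matrix.smul_mul]
  have conj_add : ∀ X Y : Matrix (Fin 4) (Fin 4) ℝ,
      Pᵀ * (X + Y) * P = Pᵀ * X * P + Pᵀ * Y * P := by
    intro X Y; rw [Matrix.mul_add, Matrix.add_mul]
  have conj_sub : ∀ X Y : Matrix (Fin 4) (Fin 4) ℝ,
      Pᵀ * (X - Y) * P = Pᵀ * X * P - Pᵀ * Y * P := by
    intro X Y; rw [Matrix.mul_sub, Matrix.sub_mul]
  have conj_one : Pᵀ * (1 : Matrix (Fin 4) (Fin 4) ℝ) * P = 1 := by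
    rw [Matrix.mul_one, hP]
  have conj_inj : ∀ Z : Matrix (Fin 4) (Fin 4) ℝ, Pᵀ * Z * P = 0 → Z = 0 := by
    intro Z hZ
    have h1 : P * (Pᵀ * Z * P) * Pᵀ = 0 := by rw [hZ, Matrix.mul_zero, Matrix.zero_mul]
    calc Z = P * (Pᵀ * Z * P) * Pᵀ := by
          rw [Matrix.mul_assoc Pᵀ Z P, hPPt, Matrix.mul_assoc, hP', Matrix.mul_one]
      _ = 0 := h1
  have conj_symm : ∀ M : Matrix (Fin 4) (Fin 4) ℝ, Mᵀ = M → (Pᵀ * M * P)ᵀ = Pᵀ * M * P := by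
    intro M hM
    rw [Matrix.transpose_mul, Matrix.transpose_mul, Matrix.transpose_transpose, hM,
      ← Matrix.mul_assoc]
  have hA2 : A ^ 2 = Pᵀ * (B4aux.DD lam1 lam2 * B4aux.DD lam1 lam2) * P := by
    rw [pow_two, hAD, conj_mul]
  -- the candidate eigenvectors
  have hvT : ∀ i : Fin 7, Pᵀ * B4aux.MM lam1 lam2 i * P ∈ T := by
    intro i
    rw [hT]
    refine ⟨conj_symm _ (B4aux.MM_symm lam1 lam2 i), ?_, ?_, ?_⟩
    · rw [trace_conj]; exact B4aux.MM_trace lam1 lam2 i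
    · rw [hAD, conj_mul, trace_conj]; exact B4aux.MM_trace_D lam1 lam2 i
    · rw [hA2, conj_mul, trace_conj]; exact B4aux.MM_trace_D2 lam1 lam2 i
  set bv : Fin 7 → T := fun i => ⟨Pᵀ * B4aux.MM lam1 lam2 i * P, hvT i⟩ with hbvdef
  have hbvc : ∀ i, (bv i : Matrix (Fin 4) (Fin 4) ℝ) = Pᵀ * B4aux.MM lam1 lam2 i * P :=
    fun i => rfl
  -- ρ is positive
  have hρpos : 0 < ρ := by
    have hXconj : A ^ 2 - (1 / 4 : ℝ) • (1 : Matrix (Fin 4) (Fin 4) ℝ) =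
        Pᵀ * (B4aux.DD lam1 lam2 * B4aux.DD lam1 lam2 - (1 / 4 : ℝ) • 1) * P := by
      rw [conj_sub, conj_smul, conj_one, hA2]
    have hDsym : (B4aux.DD lam1 lam2 * B4aux.DD lam1 lam2 - (1 / 4 : ℝ) •
        (1 : Matrix (Fin 4) (Fin 4) ℝ))ᵀ =
        B4aux.DD lam1 lam2 * B4aux.DD lam1 lam2 - (1 / 4 : ℝ) • 1 := by
      rw [B4aux.DD_eq, Matrix.diagonal_mul_diagonal]
      simp [Matrix.transpose_sub, Matrix.transpose_smul, Matrix.diagonal_transpose]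
    have hXsym : (A ^ 2 - (1 / 4 : ℝ) • (1 : Matrix (Fin 4) (Fin 4) ℝ))ᵀ =
        A ^ 2 - (1 / 4 : ℝ) • 1 := by
      rw [hXconj]; exact conj_symm _ hDsym
    have hXne : A ^ 2 - (1 / 4 : ℝ) • (1 : Matrix (Fin 4) (Fin 4) ℝ) ≠ 0 := by
      intro h0
      rw [hXconj] at h0
      have hD0 := conj_inj _ h0
      have hentry := congrFun (congrFun hD0 0) 0
      rw [B4aux.DD_eq, Matrix.diagonal_mul_diagonal] at hentry
      simp [Matrix.diagonal_apply, Matrix.vecHead, Matrix.vecTail] at hentry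
      nlinarith [hentry]
    have htr : 0 < Matrix.trace
        ((A ^ 2 - (1 / 4 : ℝ) • (1 : Matrix (Fin 4) (Fin 4) ℝ))ᵀ *
         (A ^ 2 - (1 / 4 : ℝ) • (1 : Matrix (Fin 4) (Fin 4) ℝ))) := by
      rw [hXsym]
      exact trace_mul_self_pos _ hXsym hXne
    rw [hρ]
    have := Real.sqrt_pos.mpr htr
    linarith
  -- the key determination lemma
  have key : ∀ (x : T) (κ : ℝ),
      (∀ Y : T, -(3 / ρ) * (Matrix.trace ((x : Matrix (Fin 4) (Fin 4) ℝ) * (Y : Matrix (Fin 4) (Fin 4) ℝ) * A) +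
        Matrix.trace ((x : Matrix (Fin 4) (Fin 4) ℝ) * A * (Y : Matrix (Fin 4) (Fin 4) ℝ))) =
        κ * Matrix.trace ((x : Matrix (Fin 4) (Fin 4) ℝ) * (Y : Matrix (Fin 4) (Fin 4) ℝ))) →
      S x = κ • x := by
    intro x κ hx
    set w : T := S x - κ • x with hw
    have hwcoe : (w : Matrix (Fin 4) (Fin 4) ℝ) =
        (S x : Matrix (Fin 4) (Fin 4) ℝ) - κ • (x : Matrix (Fin 4) (Fin 4) ℝ) := by
      simp [hw]
    have hzero : ∀ Y : T, Matrix.trace ((w : Matrix (Fin 4) (Fin 4) ℝ) * (Y : Matrix (Fin 4) (Fin 4) ℝ)) = 0 := by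
      intro Y
      rw [hwcoe, Matrix.sub_mul, Matrix.trace_sub, Matrix.smul_mul, Matrix.trace_smul, hS x Y,
        hx Y]
      simp
    have hwsym : (w : Matrix (Fin 4) (Fin 4) ℝ)ᵀ = w := ((hT w).mp w.2).1
    have hw0 : (w : Matrix (Fin 4) (Fin 4) ℝ) = 0 :=
      symm_eq_zero_of_trace _ hwsym (hzero w)
    have : w = 0 := by exact Subtype.ext hw0
    rw [hw] at this
    exact sub_eq_zero.mp this
  -- eigen equations for the first six vectors
  have hgen : ∀ i : Fin 7, (i : ℕ) < 6 →
      S (bv i) = (-(3 / ρ) * B4aux.kap lam1 lam2 i) • bv i := by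
    intro i hi
    apply key
    intro Y
    have hAv : A * (bv i : Matrix (Fin 4) (Fin 4) ℝ) + (bv i : Matrix (Fin 4) (Fin 4) ℝ) * A =
        B4aux.kap lam1 lam2 i • (bv i : Matrix (Fin 4) (Fin 4) ℝ) := by
      rw [hbvc, hAD, conj_mul, conj_mul, ← conj_add, B4aux.MM_eig lam1 lam2 i hi, conj_smul]
    have htr : Matrix.trace ((bv i : Matrix (Fin 4) (Fin 4) ℝ) * (Y : Matrix (Fin 4) (Fin 4) ℝ) * A) +
        Matrix.trace ((bv i : Matrix (Fin 4) (Fin 4) ℝ) * A * (Y : Matrix (Fin 4) (Fin 4) ℝ)) =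
        B4aux.kap lam1 lam2 i * Matrix.trace ((bv i : Matrix (Fin 4) (Fin 4) ℝ) * (Y : Matrix (Fin 4) (Fin 4) ℝ)) := by
      calc Matrix.trace ((bv i : Matrix (Fin 4) (Fin 4) ℝ) * (Y : Matrix (Fin 4) (Fin 4) ℝ) * A) +
            Matrix.trace ((bv i : Matrix (Fin 4) (Fin 4) ℝ) * A * (Y : Matrix (Fin 4) (Fin 4) ℝ)) =
          Matrix.trace ((A * (bv i : Matrix (Fin 4) (Fin 4) ℝ) + (bv i : Matrix (Fin 4) (Fin 4) ℝ) * A) * (Y : Matrix (Fin 4) (Fin 4) ℝ)) := by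
            rw [Matrix.add_mul, Matrix.trace_add, Matrix.trace_mul_comm ((bv i : Matrix (Fin 4) (Fin 4) ℝ) * (Y : Matrix (Fin 4) (Fin 4) ℝ)) A,
              ← Matrix.mul_assoc]
        _ = B4aux.kap lam1 lam2 i * Matrix.trace ((bv i : Matrix (Fin 4) (Fin 4) ℝ) * (Y : Matrix (Fin 4) (Fin 4) ℝ)) := by
            rw [hAv, Matrix.smul_mul, Matrix.trace_smul, smul_eq_mul]
    rw [htr]; ring
  have hS6 : S (bv 6) = (0 : ℝ) • bv 6 := by
    apply key
    intro Y
    obtain ⟨hY1, hY2, hY3, hY4⟩ := (hT (Y : Matrix (Fin 4) (Fin 4) ℝ)).mp Y.2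
    have hAv6 : (lam1 ^ 2 - lam2 ^ 2) • (A * (bv 6 : Matrix (Fin 4) (Fin 4) ℝ) +
        (bv 6 : Matrix (Fin 4) (Fin 4) ℝ) * A) =
        (2 * lam1 * lam2) • ((2 : ℝ) • (A * A) - (lam1 ^ 2 + lam2 ^ 2) •
          (1 : Matrix (Fin 4) (Fin 4) ℝ)) := by
      have h := congrArg (fun M => Pᵀ * M * P) (B4aux.MM6_eig lam1 lam2)
      rw [conj_smul, conj_add, ← conj_mul, ← conj_mul, conj_smul, conj_sub, conj_smul,
        conj_smul, conj_one, ← conj_mul, ← hAD] at h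
      exact h
    have htr0 : Matrix.trace ((bv 6 : Matrix (Fin 4) (Fin 4) ℝ) * (Y : Matrix (Fin 4) (Fin 4) ℝ) * A) +
        Matrix.trace ((bv 6 : Matrix (Fin 4) (Fin 4) ℝ) * A * (Y : Matrix (Fin 4) (Fin 4) ℝ)) = 0 := by
      have step : (lam1 ^ 2 - lam2 ^ 2) *
          (Matrix.trace ((bv 6 : Matrix (Fin 4) (Fin 4) ℝ) * (Y : Matrix (Fin 4) (Fin 4) ℝ) * A) +
           Matrix.trace ((bv 6 : Matrix (Fin 4) (Fin 4) ℝ) * A * (Y : Matrix (Fin 4) (Fin 4) ℝ))) = 0 := by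
        have e1 : Matrix.trace ((bv 6 : Matrix (Fin 4) (Fin 4) ℝ) * (Y : Matrix (Fin 4) (Fin 4) ℝ) * A) +
            Matrix.trace ((bv 6 : Matrix (Fin 4) (Fin 4) ℝ) * A * (Y : Matrix (Fin 4) (Fin 4) ℝ)) =
            Matrix.trace ((A * (bv 6 : Matrix (Fin 4) (Fin 4) ℝ) + (bv 6 : Matrix (Fin 4) (Fin 4) ℝ) * A) * (Y : Matrix (Fin 4) (Fin 4) ℝ)) := by
          rw [Matrix.add_mul, Matrix.trace_add, Matrix.trace_mul_comm ((bv 6 : Matrix (Fin 4) (Fin 4) ℝ) * (Y : Matrix (Fin 4) (Fin 4) ℝ)) A,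
            ← Matrix.mul_assoc]
        rw [e1, ← smul_eq_mul, ← Matrix.trace_smul, ← Matrix.smul_mul, hAv6]
        rw [Matrix.smul_mul, Matrix.trace_smul, Matrix.sub_mul, Matrix.trace_sub,
          Matrix.smul_mul, Matrix.smul_mul, Matrix.trace_smul, Matrix.trace_smul]
        have hAAY : Matrix.trace (A * A * (Y : Matrix (Fin 4) (Fin 4) ℝ)) = 0 := by
          rw [Matrix.trace_mul_comm, ← pow_two]
          exact hY4
        rw [hAAY, Matrix.one_mul, hY2]
        simp
      rcases mul_eq_zero.mp step with h | h
      · exact absurd h hnediff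
      · exact h
    rw [htr0]; ring
  -- scalar identification
  have hsc : ∀ k : Fin 7, -(3 / ρ) * B4aux.kap lam1 lam2 k = B4aux.mu ρ lam1 lam2 k := by
    intro k
    fin_cases k
    exacts [
      (show -(3/ρ) * (lam1+lam2) = -(3*(lam1+lam2)/ρ) by ring),
      (show -(3/ρ) * (-(lam1+lam2)) = 3*(lam1+lam2)/ρ by ring),
      (show -(3/ρ) * (lam1-lam2) = -(3*(lam1-lam2)/ρ) by ring),
      (show -(3/ρ) * (-(lam1-lam2)) = 3*(lam1-lam2)/ρ by ring),
      (show -(3/ρ) * 0 = (0:ℝ) by ring),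
      (show -(3/ρ) * 0 = (0:ℝ) by ring),
      (show -(3/ρ) * 0 = (0:ℝ) by ring)]
  have hSbv : ∀ i : Fin 7, S (bv i) = B4aux.mu ρ lam1 lam2 i • bv i := by
    intro i
    by_cases hi : (i : ℕ) < 6
    · rw [← hsc i]; exact hgen i hi
    · have hi6 : i = 6 := by
        apply Fin.ext
        have := i.isLt
        omega
      subst hi6
      rw [show B4aux.mu ρ lam1 lam2 6 = 0 from rfl]
      exact hS6
  -- linear independence
  have hli : LinearIndependent ℝ bv := by
    rw [Fintype.linearIndependent_iff]
    intro g hg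
    have hg' : ∑ i, g i • (Pᵀ * B4aux.MM lam1 lam2 i * P) = 0 := by
      have := congrArg (fun z : T => (z : Matrix (Fin 4) (Fin 4) ℝ)) hg
      simpa using this
    have hg'' : Pᵀ * (∑ i, g i • B4aux.MM lam1 lam2 i) * P = 0 := by
      rw [Matrix.mul_sum, Matrix.sum_mul]
      rw [← hg']
      refine Finset.sum_congr rfl fun i _ => ?_
      rw [Matrix.mul_smul, Matrix.smul_mul]
    exact B4aux.indep_coeffs lam1 lam2 hl1ne g (conj_inj _ hg'')
  -- spanning
  have hsp : ⊤ ≤ Submodule.span ℝ (Set.range bv) := by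
    intro x _
    obtain ⟨hx1, hx2, hx3, hx4⟩ := (hT (x : Matrix (Fin 4) (Fin 4) ℝ)).mp x.2
    set N : Matrix (Fin 4) (Fin 4) ℝ := P * (x : Matrix (Fin 4) (Fin 4) ℝ) * Pᵀ with hN
    have hNsymm : Nᵀ = N := by
      rw [hN, Matrix.transpose_mul, Matrix.transpose_mul, Matrix.transpose_transpose, hx1,
        ← Matrix.mul_assoc]
    have hN1 : Matrix.trace N = 0 := by
      rw [hN, Matrix.trace_mul_cycle, hP, Matrix.one_mul]
      exact hx2
    have hN2 : Matrix.trace (N * B4aux.DD lam1 lam2) = 0 := by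
      have : N * B4aux.DD lam1 lam2 = P * ((x : Matrix (Fin 4) (Fin 4) ℝ) * Pᵀ * B4aux.DD lam1 lam2) := by
        rw [hN]; simp only [Matrix.mul_assoc]
      rw [this, Matrix.trace_mul_comm, Matrix.mul_assoc, Matrix.mul_assoc, ← Matrix.mul_assoc Pᵀ _ P, ← hAD]
      exact hx3
    have hN3 : Matrix.trace (N * (B4aux.DD lam1 lam2 * B4aux.DD lam1 lam2)) = 0 := by
      have : N * (B4aux.DD lam1 lam2 * B4aux.DD lam1 lam2) =
          P * ((x : Matrix (Fin 4) (Fin 4) ℝ) * Pᵀ * (B4aux.DD lam1 lam2 * B4aux.DD lam1 lam2)) := by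
        rw [hN]; simp only [Matrix.mul_assoc]
      rw [this, Matrix.trace_mul_comm, Matrix.mul_assoc, Matrix.mul_assoc,
        ← Matrix.mul_assoc Pᵀ _ P, ← hA2]
      exact hx4
    have decomp := B4aux.span_decomp lam1 lam2 hl1ne hnediff N hNsymm hN1 hN2 hN3
    have hxN : (x : Matrix (Fin 4) (Fin 4) ℝ) = Pᵀ * N * P := by
      rw [hN, Matrix.mul_assoc P _ Pᵀ, hPtP, Matrix.mul_assoc, hP, Matrix.mul_one]
    have hxeq : x = N 0 2 • bv 0 + N 1 3 • bv 1 + N 0 3 • bv 2 + N 1 2 • bv 3 +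
        N 0 1 • bv 4 + N 2 3 • bv 5 + (N 3 3 / lam1) • bv 6 := by
      apply Subtype.ext
      push_cast
      try rw [hbvc, hbvc, hbvc, hbvc, hbvc, hbvc, hbvc]
      rw [hxN]
      conv_lhs => rw [decomp]
      rw [conj_add, conj_add, conj_add, conj_add, conj_add, conj_add,
        conj_smul, conj_smul, conj_smul, conj_smul, conj_smul, conj_smul, conj_smul]
      try rfl
    rw [hxeq]
    have hmem : ∀ i : Fin 7, bv i ∈ Submodule.span ℝ (Set.range bv) :=
      fun i => Submodule.subset_span ⟨i, rfl⟩
    exact Submodule.add_mem _ (Submodule.add_mem _ (Submodule.add_mem _ (Submodule.add_mem _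
      (Submodule.add_mem _ (Submodule.add_mem _
        (Submodule.smul_mem _ _ (hmem 0)) (Submodule.smul_mem _ _ (hmem 1)))
        (Submodule.smul_mem _ _ (hmem 2))) (Submodule.smul_mem _ _ (hmem 3)))
        (Submodule.smul_mem _ _ (hmem 4))) (Submodule.smul_mem _ _ (hmem 5)))
        (Submodule.smul_mem _ _ (hmem 6))
  let b : Module.Basis (Fin 7) ℝ T := Module.Basis.mk hli hsp
  have hb : ∀ i, b i = bv i := fun i => Module.Basis.mk_apply hli hsp i
  have hrank : Module.finrank ℝ T = 7 := by
    rw [Module.finrank_eq_card_basis b, Fintype.card_fin]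
  have hSb : ∀ i, S (b i) = B4aux.mu ρ lam1 lam2 i • b i := by
    intro i; rw [hb]; exact hSbv i
  have hes : ∀ t, Module.End.eigenspace S t =
      Submodule.span ℝ (b '' {i | B4aux.mu ρ lam1 lam2 i = t}) :=
    eigenspace_of_basis b S _ hSb
  -- inequalities among eigenvalues
  have hκm : 0 < 3 * (lam1 - lam2) / ρ := by
    apply div_pos
    · linarith
    · exact hρpos
  have hκp : 0 < 3 * (lam1 + lam2) / ρ := by
    apply div_pos
    · linarith
    · exact hρpos
  have hκmp : 3 * (lam1 - lam2) / ρ < 3 * (lam1 + lam2) / ρ := by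
    apply div_lt_div_of_pos_right ?_ hρpos
    linarith
  -- index characterizations
  have hch1 : ∀ i : Fin 7, B4aux.mu ρ lam1 lam2 i = 3 * (lam1 + lam2) / ρ ↔ i = 1 := by
    intro i
    fin_cases i
    exacts [
      (show (-(3*(lam1+lam2)/ρ) = 3*(lam1+lam2)/ρ) ↔ ((0 : Fin 7) = 1) from
        ⟨fun h => absurd h (by linarith), fun h => absurd h (by decide)⟩),
      (show (3*(lam1+lam2)/ρ = 3*(lam1+lam2)/ρ) ↔ ((1 : Fin 7) = 1) from
        ⟨fun _ => rfl, fun _ => rfl⟩),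
      (show (-(3*(lam1-lam2)/ρ) = 3*(lam1+lam2)/ρ) ↔ ((2 : Fin 7) = 1) from
        ⟨fun h => absurd h (by linarith), fun h => absurd h (by decide)⟩),
      (show (3*(lam1-lam2)/ρ = 3*(lam1+lam2)/ρ) ↔ ((3 : Fin 7) = 1) from
        ⟨fun h => absurd h (by linarith), fun h => absurd h (by decide)⟩),
      (show ((0:ℝ) = 3*(lam1+lam2)/ρ) ↔ ((4 : Fin 7) = 1) from
        ⟨fun h => absurd h (by linarith), fun h => absurd h (by decide)⟩),
      (show ((0:ℝ) = 3*(lam1+lam2)/ρ) ↔ ((5 : Fin 7) = 1) from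
        ⟨fun h => absurd h (by linarith), fun h => absurd h (by decide)⟩),
      (show ((0:ℝ) = 3*(lam1+lam2)/ρ) ↔ ((6 : Fin 7) = 1) from
        ⟨fun h => absurd h (by linarith), fun h => absurd h (by decide)⟩)]
  have hch0 : ∀ i : Fin 7, B4aux.mu ρ lam1 lam2 i = -(3 * (lam1 + lam2) / ρ) ↔ i = 0 := by
    intro i
    fin_cases i
    exacts [
      (show (-(3*(lam1+lam2)/ρ) = -(3*(lam1+lam2)/ρ)) ↔ ((0 : Fin 7) = 0) from
        ⟨fun _ => rfl, fun _ => rfl⟩),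
      (show (3*(lam1+lam2)/ρ = -(3*(lam1+lam2)/ρ)) ↔ ((1 : Fin 7) = 0) from
        ⟨fun h => absurd h (by linarith), fun h => absurd h (by decide)⟩),
      (show (-(3*(lam1-lam2)/ρ) = -(3*(lam1+lam2)/ρ)) ↔ ((2 : Fin 7) = 0) from
        ⟨fun h => absurd h (by linarith), fun h => absurd h (by decide)⟩),
      (show (3*(lam1-lam2)/ρ = -(3*(lam1+lam2)/ρ)) ↔ ((3 : Fin 7) = 0) from
        ⟨fun h => absurd h (by linarith), fun h => absurd h (by decide)⟩),
      (show ((0:ℝ) = -(3*(lam1+lam2)/ρ)) ↔ ((4 : Fin 7) = 0) from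
        ⟨fun h => absurd h (by linarith), fun h => absurd h (by decide)⟩),
      (show ((0:ℝ) = -(3*(lam1+lam2)/ρ)) ↔ ((5 : Fin 7) = 0) from
        ⟨fun h => absurd h (by linarith), fun h => absurd h (by decide)⟩),
      (show ((0:ℝ) = -(3*(lam1+lam2)/ρ)) ↔ ((6 : Fin 7) = 0) from
        ⟨fun h => absurd h (by linarith), fun h => absurd h (by decide)⟩)]
  have hch3 : ∀ i : Fin 7, B4aux.mu ρ lam1 lam2 i = 3 * (lam1 - lam2) / ρ ↔ i = 3 := by
    intro i
    fin_cases i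
    exacts [
      (show (-(3*(lam1+lam2)/ρ) = 3*(lam1-lam2)/ρ) ↔ ((0 : Fin 7) = 3) from
        ⟨fun h => absurd h (by linarith), fun h => absurd h (by decide)⟩),
      (show (3*(lam1+lam2)/ρ = 3*(lam1-lam2)/ρ) ↔ ((1 : Fin 7) = 3) from
        ⟨fun h => absurd h (by linarith), fun h => absurd h (by decide)⟩),
      (show (-(3*(lam1-lam2)/ρ) = 3*(lam1-lam2)/ρ) ↔ ((2 : Fin 7) = 3) from
        ⟨fun h => absurd h (by linarith), fun h => absurd h (by decide)⟩),
      (show (3*(lam1-lam2)/ρ = 3*(lam1-lam2)/ρ) ↔ ((3 : Fin 7) = 3) from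
        ⟨fun _ => rfl, fun _ => rfl⟩),
      (show ((0:ℝ) = 3*(lam1-lam2)/ρ) ↔ ((4 : Fin 7) = 3) from
        ⟨fun h => absurd h (by linarith), fun h => absurd h (by decide)⟩),
      (show ((0:ℝ) = 3*(lam1-lam2)/ρ) ↔ ((5 : Fin 7) = 3) from
        ⟨fun h => absurd h (by linarith), fun h => absurd h (by decide)⟩),
      (show ((0:ℝ) = 3*(lam1-lam2)/ρ) ↔ ((6 : Fin 7) = 3) from
        ⟨fun h => absurd h (by linarith), fun h => absurd h (by decide)⟩)]
  have hch2 : ∀ i : Fin 7, B4aux.mu ρ lam1 lam2 i = -(3 * (lam1 - lam2) / ρ) ↔ i = 2 := by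
    intro i
    fin_cases i
    exacts [
      (show (-(3*(lam1+lam2)/ρ) = -(3*(lam1-lam2)/ρ)) ↔ ((0 : Fin 7) = 2) from
        ⟨fun h => absurd h (by linarith), fun h => absurd h (by decide)⟩),
      (show (3*(lam1+lam2)/ρ = -(3*(lam1-lam2)/ρ)) ↔ ((1 : Fin 7) = 2) from
        ⟨fun h => absurd h (by linarith), fun h => absurd h (by decide)⟩),
      (show (-(3*(lam1-lam2)/ρ) = -(3*(lam1-lam2)/ρ)) ↔ ((2 : Fin 7) = 2) from
        ⟨fun _ => rfl, fun _ => rfl⟩),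
      (show (3*(lam1-lam2)/ρ = -(3*(lam1-lam2)/ρ)) ↔ ((3 : Fin 7) = 2) from
        ⟨fun h => absurd h (by linarith), fun h => absurd h (by decide)⟩),
      (show ((0:ℝ) = -(3*(lam1-lam2)/ρ)) ↔ ((4 : Fin 7) = 2) from
        ⟨fun h => absurd h (by linarith), fun h => absurd h (by decide)⟩),
      (show ((0:ℝ) = -(3*(lam1-lam2)/ρ)) ↔ ((5 : Fin 7) = 2) from
        ⟨fun h => absurd h (by linarith), fun h => absurd h (by decide)⟩),
      (show ((0:ℝ) = -(3*(lam1-lam2)/ρ)) ↔ ((6 : Fin 7) = 2) from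
        ⟨fun h => absurd h (by linarith), fun h => absurd h (by decide)⟩)]
  have hchz : ∀ i : Fin 7, B4aux.mu ρ lam1 lam2 i = 0 ↔ (i = 4 ∨ i = 5 ∨ i = 6) := by
    intro i
    fin_cases i
    exacts [
      (show (-(3*(lam1+lam2)/ρ) = 0) ↔ ((0 : Fin 7) = 4 ∨ (0 : Fin 7) = 5 ∨ (0 : Fin 7) = 6) from
        ⟨fun h => absurd h (by linarith), fun h => absurd h (by decide)⟩),
      (show (3*(lam1+lam2)/ρ = 0) ↔ ((1 : Fin 7) = 4 ∨ (1 : Fin 7) = 5 ∨ (1 : Fin 7) = 6) from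
        ⟨fun h => absurd h (by linarith), fun h => absurd h (by decide)⟩),
      (show (-(3*(lam1-lam2)/ρ) = 0) ↔ ((2 : Fin 7) = 4 ∨ (2 : Fin 7) = 5 ∨ (2 : Fin 7) = 6) from
        ⟨fun h => absurd h (by linarith), fun h => absurd h (by decide)⟩),
      (show (3*(lam1-lam2)/ρ = 0) ↔ ((3 : Fin 7) = 4 ∨ (3 : Fin 7) = 5 ∨ (3 : Fin 7) = 6) from
        ⟨fun h => absurd h (by linarith), fun h => absurd h (by decide)⟩),
      (show ((0:ℝ) = 0) ↔ ((4 : Fin 7) = 4 ∨ (4 : Fin 7) = 5 ∨ (4 : Fin 7) = 6) from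
        ⟨fun _ => Or.inl rfl, fun _ => rfl⟩),
      (show ((0:ℝ) = 0) ↔ ((5 : Fin 7) = 4 ∨ (5 : Fin 7) = 5 ∨ (5 : Fin 7) = 6) from
        ⟨fun _ => Or.inr (Or.inl rfl), fun _ => rfl⟩),
      (show ((0:ℝ) = 0) ↔ ((6 : Fin 7) = 4 ∨ (6 : Fin 7) = 5 ∨ (6 : Fin 7) = 6) from
        ⟨fun _ => Or.inr (Or.inr rfl), fun _ => rfl⟩)]
  -- finrank of singleton eigenspaces
  have singleton_rank : ∀ (t : ℝ) (i0 : Fin 7),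
      (∀ i : Fin 7, B4aux.mu ρ lam1 lam2 i = t ↔ i = i0) →
      Module.finrank ℝ (Module.End.eigenspace S t) = 1 := by
    intro t i0 hch
    rw [hes]
    have himg : b '' {i | B4aux.mu ρ lam1 lam2 i = t} = {b i0} := by
      apply Set.Subset.antisymm
      · rintro y ⟨i, hi, rfl⟩
        rw [Set.mem_singleton_iff, (hch i).mp hi]
      · intro y hy
        rw [Set.mem_singleton_iff] at hy
        exact ⟨i0, (hch i0).mpr rfl, hy.symm⟩
    rw [himg]
    exact finrank_span_singleton (b.ne_zero i0)
  refine ⟨hrank, ?_, singleton_rank _ 1 hch1, singleton_rank _ 0 hch0,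
    singleton_rank _ 3 hch3, singleton_rank _ 2 hch2, ?_⟩
  · -- eigenvalue characterization
    intro μ
    constructor
    · intro hμ
      by_contra hnot
      push_neg at hnot
      obtain ⟨hn1, hn2, hn3, hn4, hn5⟩ := hnot
      have hempty : {i : Fin 7 | B4aux.mu ρ lam1 lam2 i = μ} = ∅ := by
        apply Set.eq_empty_iff_forall_notMem.mpr
        intro i hi
        simp only [Set.mem_setOf_eq] at hi
        revert hi
        fin_cases i
        exacts [
          (show ¬(-(3*(lam1+lam2)/ρ) = μ) from fun h => hn2 h.symm),
          (show ¬(3*(lam1+lam2)/ρ = μ) from fun h => hn1 h.symm),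
          (show ¬(-(3*(lam1-lam2)/ρ) = μ) from fun h => hn4 h.symm),
          (show ¬(3*(lam1-lam2)/ρ = μ) from fun h => hn3 h.symm),
          (show ¬((0:ℝ) = μ) from fun h => hn5 h.symm),
          (show ¬((0:ℝ) = μ) from fun h => hn5 h.symm),
          (show ¬((0:ℝ) = μ) from fun h => hn5 h.symm)]
      obtain ⟨w, hw⟩ := hμ.exists_hasEigenvector
      have hwmem : w ∈ Module.End.eigenspace S μ :=
        Module.End.mem_eigenspace_iff.mpr hw.apply_eq_smul
      rw [hes, hempty, Set.image_empty, Submodule.span_empty, Submodule.mem_bot] at hwmem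
      exact hw.2 hwmem
    · intro hμ
      rcases hμ with rfl | rfl | rfl | rfl | rfl
      · exact Module.End.hasEigenvalue_of_hasEigenvector
          ⟨Module.End.mem_eigenspace_iff.mpr (hSb 1), b.ne_zero 1⟩
      · exact Module.End.hasEigenvalue_of_hasEigenvector
          ⟨Module.End.mem_eigenspace_iff.mpr (hSb 0), b.ne_zero 0⟩
      · exact Module.End.hasEigenvalue_of_hasEigenvector
          ⟨Module.End.mem_eigenspace_iff.mpr (hSb 3), b.ne_zero 3⟩
      · exact Module.End.hasEigenvalue_of_hasEigenvector
          ⟨Module.End.mem_eigenspace_iff.mpr (hSb 2), b.ne_zero 2⟩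
      · exact Module.End.hasEigenvalue_of_hasEigenvector
          ⟨Module.End.mem_eigenspace_iff.mpr (hSb 4), b.ne_zero 4⟩
  · -- zero eigenspace has rank 3
    rw [hes]
    have himg : b '' {i | B4aux.mu ρ lam1 lam2 i = 0} =
        Set.range (b ∘ ![(4 : Fin 7), 5, 6]) := by
      apply Set.Subset.antisymm
      · rintro y ⟨i, hi, rfl⟩
        rcases (hchz i).mp hi with rfl | rfl | rfl
        · exact ⟨0, rfl⟩
        · exact ⟨1, rfl⟩
        · exact ⟨2, rfl⟩
      · rintro y ⟨j, rfl⟩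
        fin_cases j
        · exact ⟨4, (hchz 4).mpr (Or.inl rfl), rfl⟩
        · exact ⟨5, (hchz 5).mpr (Or.inr (Or.inl rfl)), rfl⟩
        · exact ⟨6, (hchz 6).mpr (Or.inr (Or.inr rfl)), rfl⟩
    rw [himg]
    rw [finrank_span_eq_card (b.linearIndependent.comp ![(4 : Fin 7), 5, 6] (by decide))]
    rfl
end

section
/- Let A = (1/2)·diag(1, 1, −1, −1) ∈ M₄(ℂ). For every matrix ξ ∈ M₄(ℂ) of the block-diagonal form ξ = diag(ξ₁, ξ₂), where ξ₁ and ξ₂ are 2×2 complex Hermitian matrices each with trace 0, there exists a unitary matrix P ∈ U(4) such that P*AP = A and P*ξP = −ξ. (Such ξ are exactly the normal vectors to the orbit C_{4,ℂ} at A inside the unit sphere; this reflection property is the key step proving that C_{4,ℂ} is an austere submanifold.) -/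
open Matrix

lemma reflect2 (ξ : Matrix (Fin 2) (Fin 2) ℂ) (h : ξᴴ = ξ) (ht : Matrix.trace ξ = 0) :
    ∃ U : Matrix (Fin 2) (Fin 2) ℂ, Uᴴ * U = 1 ∧ Uᴴ * ξ * U = -ξ := by
  set b := ξ 0 1 with hb
  have h10 : ξ 1 0 = starRingEnd ℂ b := by
    have := congrFun (congrFun h 0) 1
    simp only [Matrix.conjTranspose_apply, RCLike.star_def, ← hb] at this
    rw [← this, Complex.conj_conj]
  have h11 : ξ 1 1 = -ξ 0 0 := by
    have : ξ 0 0 + ξ 1 1 = 0 := by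
      simpa [Matrix.trace, Fin.sum_univ_two] using ht
    linear_combination this
  set v : ℂ := if b = 0 then 1 else -(starRingEnd ℂ b) / b with hv
  have hvs : starRingEnd ℂ v = if b = 0 then 1 else -b / starRingEnd ℂ b := by
    by_cases hb0 : b = 0 <;> simp [hv, hb0, map_div₀, Complex.conj_conj]
  have hsb : b ≠ 0 → starRingEnd ℂ b ≠ 0 := fun hb0 h0 => hb0 (by
    simpa using congrArg (starRingEnd ℂ) h0)
  have hvv : starRingEnd ℂ v * v = 1 := by
    by_cases hb0 : b = 0
    · simp [hvs, hv, hb0]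
    · rw [hvs, hv, if_neg hb0, if_neg hb0]
      field_simp [hsb hb0]
  have hbv : b * v = -starRingEnd ℂ b := by
    by_cases hb0 : b = 0
    · simp [hv, hb0]
    · rw [hv, if_neg hb0]
      field_simp
  have hsv : starRingEnd ℂ v * starRingEnd ℂ b = -b := by
    by_cases hb0 : b = 0
    · simp [hvs, hb0]
    · rw [hvs, if_neg hb0]
      field_simp [hsb hb0]
  refine ⟨!![0, 1; v, 0], ?_, ?_⟩
  · ext i j
    fin_cases i <;> fin_cases j <;>
      simp [Matrix.mul_apply, Fin.sum_univ_two, Matrix.conjTranspose_apply, hvv]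
  · ext i j
    fin_cases i <;> fin_cases j <;>
      simp [Matrix.mul_apply, Fin.sum_univ_two, Matrix.conjTranspose_apply]
    · rw [h11]; linear_combination (-ξ 0 0) * hvv
    · rw [h10]; exact hsv
    · rw [← hb, h10]; exact hbv
    · rw [h11]; ring

/-- for every normal direction `ξ = diag(ξ₁, ξ₂)` (with `ξ₁, ξ₂`
traceless Hermitian `2×2` blocks) at `A = (1/2)·diag(1,1,−1,−1)`, there is a unitary
`P` fixing `A` under conjugation and sending `ξ` to `−ξ`. -/
theorem normal_reflection_C4C (ξ₁ ξ₂ : Matrix (Fin 2) (Fin 2) ℂ)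
    (h₁ : ξ₁ᴴ = ξ₁) (h₂ : ξ₂ᴴ = ξ₂)
    (ht₁ : Matrix.trace ξ₁ = 0) (ht₂ : Matrix.trace ξ₂ = 0) :
    ∃ P : Matrix (Fin 2 ⊕ Fin 2) (Fin 2 ⊕ Fin 2) ℂ,
      Pᴴ * P = 1 ∧
      Pᴴ * (Matrix.fromBlocks ((1 / 2 : ℂ) • 1) 0 0 (-((1 / 2 : ℂ) • 1))) * P =
        Matrix.fromBlocks ((1 / 2 : ℂ) • 1) 0 0 (-((1 / 2 : ℂ) • 1)) ∧
      Pᴴ * (Matrix.fromBlocks ξ₁ 0 0 ξ₂) * P = -(Matrix.fromBlocks ξ₁ 0 0 ξ₂) := by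
  obtain ⟨U₁, hU₁, hξ₁⟩ := reflect2 ξ₁ h₁ ht₁
  obtain ⟨U₂, hU₂, hξ₂⟩ := reflect2 ξ₂ h₂ ht₂
  refine ⟨Matrix.fromBlocks U₁ 0 0 U₂, ?_, ?_, ?_⟩
  · rw [← Matrix.fromBlocks_one]
    simp [Matrix.fromBlocks_conjTranspose, Matrix.fromBlocks_multiply, hU₁, hU₂]
  · simp only [Matrix.fromBlocks_conjTranspose, Matrix.fromBlocks_multiply,
      Matrix.conjTranspose_zero, Matrix.mul_zero, Matrix.zero_mul, Matrix.mul_one,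
      Matrix.mul_neg, Matrix.neg_mul, Matrix.smul_mul, Matrix.mul_smul, smul_zero,
      add_zero, zero_add, mul_smul_comm, smul_mul_assoc, hU₁, hU₂, neg_zero]
  · rw [show -(Matrix.fromBlocks ξ₁ 0 0 ξ₂) = Matrix.fromBlocks (-ξ₁) (-0) (-0) (-ξ₂) from
      (Matrix.fromBlocks_neg _ _ _ _)]
    simp [Matrix.fromBlocks_conjTranspose, Matrix.fromBlocks_multiply,
      Matrix.mul_assoc, ← Matrix.mul_assoc, hξ₁, hξ₂]
end

section
/- Let m₁ and m₂ be q×q real symmetric matrices. Then the 2q×2q real symmetric matrix M = [[m₁, m₂],[m₂, −m₁]] (in 2×2 block form) is austere: tr(M^{2k+1}) = 0 for every integer k ≥ 0. Hence the space of all such matrices M is an austere subspace of the 2q×2q real symmetric matrices of dimension q(q+1). -/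
open Matrix

/-- The submodule of symmetric `q × q` real matrices. -/
def symSub (q : ℕ) : Submodule ℝ (Matrix (Fin q) (Fin q) ℝ) where
  carrier := {A | Aᵀ = A}
  add_mem' := by
    intro a b ha hb
    simp only [Set.mem_setOf_eq] at *
    rw [Matrix.transpose_add, ha, hb]
  zero_mem' := Matrix.transpose_zero
  smul_mem' := by
    intro c a ha
    simp only [Set.mem_setOf_eq] at *
    rw [Matrix.transpose_smul, ha]

/-- Symmetric matrices are determined by their upper-triangular entries. -/
noncomputable def symEquiv (q : ℕ) :
    (symSub q) ≃ₗ[ℝ] ({p : Fin q × Fin q // p.1 ≤ p.2} → ℝ) where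
  toFun A p := A.1 p.1.1 p.1.2
  map_add' A B := rfl
  map_smul' c A := rfl
  invFun f := ⟨Matrix.of fun i j =>
      if h : i ≤ j then f ⟨(i, j), h⟩ else f ⟨(j, i), le_of_not_ge h⟩, by
    show _ᵀ = _
    ext i j
    by_cases h : i ≤ j
    · by_cases h' : j ≤ i
      · have : i = j := le_antisymm h h'
        subst this; rfl
      · simp [Matrix.transpose_apply, h, h']
    · have h' : j ≤ i := le_of_not_ge h
      simp [Matrix.transpose_apply, h, h']⟩
  left_inv := by
    rintro ⟨A, hA⟩
    apply Subtype.ext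
    ext i j
    show (if h : i ≤ j then A i j else A j i) = A i j
    by_cases h : i ≤ j
    · simp [h]
    · simp only [h, dif_neg, not_false_iff]
      conv_rhs => rw [← hA]
      rfl
  right_inv := by
    intro f
    funext p
    obtain ⟨⟨i, j⟩, h⟩ := p
    show (if h' : i ≤ j then f ⟨(i, j), h'⟩ else _) = f ⟨(i, j), h⟩
    simp [h]

/-- The linear map sending a pair of symmetric matrices to the Bryant block matrix. -/
def blkMap (q : ℕ) : ((symSub q) × (symSub q)) →ₗ[ℝ]
    Matrix (Fin q ⊕ Fin q) (Fin q ⊕ Fin q) ℝ where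
  toFun p := Matrix.fromBlocks p.1.1 p.2.1 p.2.1 (-p.1.1)
  map_add' p r := by
    simp only [Submodule.coe_add, Prod.fst_add, Prod.snd_add]
    rw [neg_add, ← Matrix.fromBlocks_add]
  map_smul' c p := by
    simp only [Submodule.coe_smul, Prod.smul_fst, Prod.smul_snd, RingHom.id_apply]
    rw [← smul_neg, ← Matrix.fromBlocks_smul]

lemma blkMap_injective (q : ℕ) : Function.Injective (blkMap q) := by
  intro p r h
  have h1 := congrArg Matrix.toBlocks₁₁ h
  have h2 := congrArg Matrix.toBlocks₁₂ h
  simp only [blkMap, LinearMap.coe_mk, AddHom.coe_mk, Matrix.toBlocks_fromBlocks₁₁,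
    Matrix.toBlocks_fromBlocks₁₂] at h1 h2
  ext1
  · exact Subtype.ext h1
  · exact Subtype.ext h2

/-- Bryant's construction: for symmetric `m₁, m₂`, the block matrix
`[[m₁, m₂], [m₂, −m₁]]` is austere, and the space of all such matrices is an austere
subspace of dimension `q(q+1)`. -/
theorem bryant_block_construction_austere (q : ℕ) :
    (∀ m₁ m₂ : Matrix (Fin q) (Fin q) ℝ, m₁ᵀ = m₁ → m₂ᵀ = m₂ →
      ∀ k : ℕ, Matrix.trace ((Matrix.fromBlocks m₁ m₂ m₂ (-m₁)) ^ (2 * k + 1)) = 0) ∧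
    Module.finrank ℝ (Submodule.span ℝ
      {M : Matrix (Fin q ⊕ Fin q) (Fin q ⊕ Fin q) ℝ |
        ∃ m₁ m₂ : Matrix (Fin q) (Fin q) ℝ, m₁ᵀ = m₁ ∧ m₂ᵀ = m₂ ∧
          M = Matrix.fromBlocks m₁ m₂ m₂ (-m₁)}) = q * (q + 1) := by
  constructor
  · intro m₁ m₂ h₁ h₂ k
    set M : Matrix (Fin q ⊕ Fin q) (Fin q ⊕ Fin q) ℝ := Matrix.fromBlocks m₁ m₂ m₂ (-m₁) with hM
    set J : Matrix (Fin q ⊕ Fin q) (Fin q ⊕ Fin q) ℝ := Matrix.fromBlocks 0 1 (-1) 0 with hJdef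
    have hJ : J * Jᵀ = 1 := by
      simp [hJdef, Matrix.fromBlocks_transpose, Matrix.fromBlocks_multiply,
        Matrix.fromBlocks_one]
    have hJ' : Jᵀ * J = 1 := mul_eq_one_comm.mp hJ
    have hconj : J * M * Jᵀ = -M := by
      simp [hJdef, hM, Matrix.fromBlocks_transpose, Matrix.fromBlocks_multiply,
        Matrix.fromBlocks_neg]
    have key : ∀ n : ℕ, (J * M * Jᵀ) ^ n = J * M ^ n * Jᵀ := by
      intro n
      induction n with
      | zero => simp [hJ]
      | succ n ih =>
        rw [pow_succ, ih, pow_succ]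
        calc J * M ^ n * Jᵀ * (J * M * Jᵀ)
            = J * M ^ n * (Jᵀ * J) * M * Jᵀ := by simp only [mul_assoc]
          _ = J * (M ^ n * M) * Jᵀ := by rw [hJ']; simp only [mul_assoc, mul_one, one_mul]
    have hodd : Odd (2 * k + 1) := ⟨k, by ring⟩
    have h3 : Matrix.trace (M ^ (2 * k + 1)) = - Matrix.trace (M ^ (2 * k + 1)) := by
      conv_lhs => rw [show M ^ (2 * k + 1) = Jᵀ * J * (M ^ (2 * k + 1)) by rw [hJ', one_mul]]
      rw [← Matrix.trace_mul_cycle, ← key, hconj, hodd.neg_pow, Matrix.trace_neg]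
    linarith
  · have hset : {M : Matrix (Fin q ⊕ Fin q) (Fin q ⊕ Fin q) ℝ |
        ∃ m₁ m₂ : Matrix (Fin q) (Fin q) ℝ, m₁ᵀ = m₁ ∧ m₂ᵀ = m₂ ∧
          M = Matrix.fromBlocks m₁ m₂ m₂ (-m₁)} = ↑(LinearMap.range (blkMap q)) := by
      ext M
      constructor
      · rintro ⟨m₁, m₂, h₁, h₂, rfl⟩
        exact ⟨(⟨m₁, h₁⟩, ⟨m₂, h₂⟩), rfl⟩
      · rintro ⟨⟨⟨m₁, h₁⟩, ⟨m₂, h₂⟩⟩, rfl⟩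
        exact ⟨m₁, m₂, h₁, h₂, rfl⟩
    rw [hset, Submodule.span_eq]
    rw [LinearMap.finrank_range_of_inj (blkMap_injective q)]
    rw [Module.finrank_prod]
    have hsym : Module.finrank ℝ (symSub q)
        = Fintype.card {p : Fin q × Fin q // p.1 ≤ p.2} := by
      rw [(symEquiv q).finrank_eq, Module.finrank_fintype_fun_eq_card]
    have hcard : Fintype.card {p : Fin q × Fin q // p.1 ≤ p.2} = (q + 1).choose 2 := by
      rw [← Fintype.card_congr (Sym2.sortEquiv (α := Fin q)), Sym2.card, Fintype.card_fin]
    have hchoose : (q + 1).choose 2 = (q + 1) * q / 2 := by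
      rw [Nat.choose_two_right]; simp
    have hdvd : 2 ∣ (q + 1) * q := by
      rw [mul_comm]
      exact (Nat.even_mul_succ_self q).two_dvd
    have hcomm : (q + 1) * q = q * (q + 1) := mul_comm _ _
    rw [hsym, hcard, hchoose]
    omega
end

section
/- Let m be a q×q real matrix and λ ∈ ℝ. Then the 2q×2q real symmetric matrix M = [[λI_q, m],[mᵀ, −λI_q]] (in 2×2 block form) is austere: tr(M^{2k+1}) = 0 for every integer k ≥ 0. Hence the space of all such matrices M is an austere subspace of the 2q×2q real symmetric matrices of dimension q² + 1. -/
open Matrix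

/-- Trace of a block matrix is the sum of the traces of its diagonal blocks. -/
lemma aux_trace_fromBlocks {n : Type*} [Fintype n] (A B C D : Matrix n n ℝ) :
    Matrix.trace (Matrix.fromBlocks A B C D) = Matrix.trace A + Matrix.trace D := by
  simp [Matrix.trace, Matrix.diag, Fintype.sum_sum_type]

/-- Powers of a block diagonal matrix. -/
lemma aux_fromBlocks_pow {n : Type*} [Fintype n] [DecidableEq n]
    (P Q : Matrix n n ℝ) (k : ℕ) :
    (Matrix.fromBlocks P 0 0 Q) ^ k = Matrix.fromBlocks (P ^ k) 0 0 (Q ^ k) := by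
  induction k with
  | zero => simp [Matrix.fromBlocks_one]
  | succ k ih =>
      rw [pow_succ, pow_succ, pow_succ, ih, Matrix.fromBlocks_multiply]
      simp

/-- The intertwining identity `(c + mmᵀ)^j m = m (c + mᵀm)^j`. -/
lemma aux_intertwine {n : Type*} [Fintype n] [DecidableEq n]
    (m : Matrix n n ℝ) (c : ℝ) (j : ℕ) :
    (c • 1 + m * mᵀ) ^ j * m = m * ((c • 1 + mᵀ * m) ^ j) := by
  induction j with
  | zero => simp
  | succ j ih =>
      have hstep : (c • 1 + m * mᵀ) * m = m * (c • 1 + mᵀ * m) := by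
        simp [Matrix.add_mul, Matrix.mul_add, Matrix.smul_mul, Matrix.mul_smul,
          Matrix.mul_assoc]
      calc (c • 1 + m * mᵀ) ^ (j + 1) * m
          = (c • 1 + m * mᵀ) ^ j * ((c • 1 + m * mᵀ) * m) := by
            rw [pow_succ, Matrix.mul_assoc]
        _ = (c • 1 + m * mᵀ) ^ j * (m * (c • 1 + mᵀ * m)) := by rw [hstep]
        _ = ((c • 1 + m * mᵀ) ^ j * m) * (c • 1 + mᵀ * m) := by rw [Matrix.mul_assoc]
        _ = m * ((c • 1 + mᵀ * m) ^ j * (c • 1 + mᵀ * m)) := by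
            rw [ih, Matrix.mul_assoc]
        _ = m * (c • 1 + mᵀ * m) ^ (j + 1) := by rw [← pow_succ]

/-- Traces of powers of `c + mmᵀ` and `c + mᵀm` agree. -/
lemma aux_trace_pow_eq {n : Type*} [Fintype n] [DecidableEq n]
    (m : Matrix n n ℝ) (c : ℝ) (j : ℕ) :
    Matrix.trace ((c • 1 + m * mᵀ) ^ j) = Matrix.trace ((c • 1 + mᵀ * m) ^ j) := by
  induction j with
  | zero => simp
  | succ j ih =>
      rw [pow_succ, pow_succ, Matrix.mul_add, Matrix.mul_add,
        Matrix.trace_add, Matrix.trace_add]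
      congr 1
      · simp only [Matrix.mul_smul, Matrix.mul_one, Matrix.trace_smul, ih]
      · calc Matrix.trace ((c • 1 + m * mᵀ) ^ j * (m * mᵀ))
            = Matrix.trace (((c • 1 + m * mᵀ) ^ j * m) * mᵀ) := by
              rw [Matrix.mul_assoc]
          _ = Matrix.trace ((m * (c • 1 + mᵀ * m) ^ j) * mᵀ) := by
              rw [aux_intertwine]
          _ = Matrix.trace (mᵀ * (m * (c • 1 + mᵀ * m) ^ j)) := by
              rw [Matrix.trace_mul_comm]
          _ = Matrix.trace ((mᵀ * m) * (c • 1 + mᵀ * m) ^ j) := by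
              rw [Matrix.mul_assoc]
          _ = Matrix.trace ((c • 1 + mᵀ * m) ^ j * (mᵀ * m)) := by
              rw [Matrix.trace_mul_comm]

/-- Bryant's construction: for any `q×q` real matrix `m` and `λ ∈ ℝ`,
the block matrix `[[λI, m], [mᵀ, −λI]]` is austere, and the space of all such matrices
is an austere subspace of dimension `q² + 1`. -/
theorem bryant_lambda_block_construction_austere (q : ℕ) (hq : 1 ≤ q) :
    (∀ (m : Matrix (Fin q) (Fin q) ℝ) (lam : ℝ),
      ∀ k : ℕ, Matrix.trace
        ((Matrix.fromBlocks (lam • (1 : Matrix (Fin q) (Fin q) ℝ)) m mᵀ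
          (-(lam • (1 : Matrix (Fin q) (Fin q) ℝ)))) ^ (2 * k + 1)) = 0) ∧
    Module.finrank ℝ (Submodule.span ℝ
      {M : Matrix (Fin q ⊕ Fin q) (Fin q ⊕ Fin q) ℝ |
        ∃ (m : Matrix (Fin q) (Fin q) ℝ) (lam : ℝ),
          M = Matrix.fromBlocks (lam • (1 : Matrix (Fin q) (Fin q) ℝ)) m mᵀ
            (-(lam • (1 : Matrix (Fin q) (Fin q) ℝ)))}) = q ^ 2 + 1 := by
  constructor
  · intro m lam k
    set A : Matrix (Fin q) (Fin q) ℝ := lam • 1 with hA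
    set M : Matrix (Fin q ⊕ Fin q) (Fin q ⊕ Fin q) ℝ := Matrix.fromBlocks A m mᵀ (-A) with hM
    -- M ^ 2 is block diagonal
    have h11 : A * A + m * mᵀ = (lam ^ 2) • 1 + m * mᵀ := by
      rw [hA]; congr 1
      simp [Matrix.smul_mul, Matrix.mul_smul, smul_smul, pow_two]
    have h12 : A * m + m * (-A) = 0 := by
      rw [hA]; simp [Matrix.smul_mul, Matrix.mul_smul]
    have h21 : mᵀ * A + (-A) * mᵀ = 0 := by
      rw [hA]; simp [Matrix.smul_mul, Matrix.mul_smul]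
    have h22 : mᵀ * m + (-A) * (-A) = (lam ^ 2) • 1 + mᵀ * m := by
      rw [hA]; rw [add_comm]; congr 1
      simp [Matrix.smul_mul, Matrix.mul_smul, smul_smul, pow_two]
    have hM2 : M ^ 2 = Matrix.fromBlocks ((lam ^ 2) • 1 + m * mᵀ) 0 0
        ((lam ^ 2) • 1 + mᵀ * m) := by
      rw [pow_two, hM, Matrix.fromBlocks_multiply, h11, h12, h21, h22]
    -- compute the odd power
    have hodd : M ^ (2 * k + 1) = Matrix.fromBlocks
        (((lam ^ 2) • 1 + m * mᵀ) ^ k * A) (((lam ^ 2) • 1 + m * mᵀ) ^ k * m)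
        (((lam ^ 2) • 1 + mᵀ * m) ^ k * mᵀ) (((lam ^ 2) • 1 + mᵀ * m) ^ k * (-A)) := by
      rw [pow_succ, pow_mul, hM2, aux_fromBlocks_pow, hM, Matrix.fromBlocks_multiply]
      simp
    rw [hodd, aux_trace_fromBlocks]
    rw [show ((lam ^ 2) • 1 + m * mᵀ) ^ k * A = lam • ((lam ^ 2) • 1 + m * mᵀ) ^ k by
      rw [hA]; simp [Matrix.mul_smul]]
    rw [show ((lam ^ 2) • 1 + mᵀ * m) ^ k * (-A) = (-lam) • ((lam ^ 2) • 1 + mᵀ * m) ^ k by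
      rw [hA]; simp [Matrix.mul_smul]]
    rw [Matrix.trace_smul, Matrix.trace_smul, aux_trace_pow_eq m (lam ^ 2) k]
    simp
  · -- dimension count
    haveI : NeZero q := ⟨by omega⟩
    set Φ : (Matrix (Fin q) (Fin q) ℝ × ℝ) →ₗ[ℝ]
        Matrix (Fin q ⊕ Fin q) (Fin q ⊕ Fin q) ℝ :=
      { toFun := fun p => Matrix.fromBlocks (p.2 • 1) p.1 p.1ᵀ (-(p.2 • 1))
        map_add' := by
          intro p r
          ext (i | i) (j | j) <;>
            simp [Matrix.fromBlocks, Matrix.one_apply, add_smul] <;> ring_nf <;>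
            by_cases h : i = j <;> simp [h] <;> ring
        map_smul' := by
          intro c p
          ext (i | i) (j | j) <;>
            simp [Matrix.fromBlocks, Matrix.one_apply, smul_smul] } with hΦ
    have hset : {M : Matrix (Fin q ⊕ Fin q) (Fin q ⊕ Fin q) ℝ |
        ∃ (m : Matrix (Fin q) (Fin q) ℝ) (lam : ℝ),
          M = Matrix.fromBlocks (lam • (1 : Matrix (Fin q) (Fin q) ℝ)) m mᵀ
            (-(lam • (1 : Matrix (Fin q) (Fin q) ℝ)))} = Set.range Φ := by
      ext M
      constructor
      · rintro ⟨m, lam, rfl⟩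
        exact ⟨(m, lam), rfl⟩
      · rintro ⟨⟨m, lam⟩, rfl⟩
        exact ⟨m, lam, rfl⟩
    rw [hset]
    have hrange : Submodule.span ℝ (Set.range Φ) = LinearMap.range Φ := by
      rw [← LinearMap.coe_range, Submodule.span_eq]
    rw [hrange]
    have hinj : Function.Injective Φ := by
      rw [← LinearMap.ker_eq_bot]
      rw [Submodule.eq_bot_iff]
      rintro ⟨m, lam⟩ hp
      have hp' : Matrix.fromBlocks (lam • (1 : Matrix (Fin q) (Fin q) ℝ)) m mᵀ
          (-(lam • (1 : Matrix (Fin q) (Fin q) ℝ))) = 0 := hp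
      have hm : m = 0 := by
        ext i j
        have := congrFun (congrFun hp' (Sum.inl i)) (Sum.inr j)
        simpa using this
      have hlam : lam = 0 := by
        have := congrFun (congrFun hp' (Sum.inl 0)) (Sum.inl 0)
        simpa [Matrix.one_apply] using this
      simp [hm, hlam, Prod.ext_iff]
    rw [LinearMap.finrank_range_of_inj hinj]
    rw [Module.finrank_prod, Module.finrank_matrix]
    simp [pow_two]
end
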